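/- arXiv:1409.6245 — 7 statements merged into one kernel-verified Lean document; each statement's English description precedes it below -/
import Mathlib

section
/- If a symmetric block matrix D = [[R, B], [B^T, C]] with invertible block C has exactly one negative eigenvalue and all other eigenvalues positive, and if the Schur complement D_cg = R - B C^{-1} B^T has a negative eigenvalue, then C is positive definite. -/
open Matrix

private lemma diag_quad_nonneg {n : Type*} [Fintype n] {lam : n → ℝ} {i : n}
    (hpos : ∀ j, j ≠ i → 0 < lam j) {c : n → ℝ} (hci : c i = 0) :
    0 ≤ ∑ j, lam j * (c j * c j) := by
  refine Finset.sum_nonneg fun j _ => ?_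
  by_cases hj : j = i
  · subst hj; simp [hci]
  · exact mul_nonneg (hpos j hj).le (mul_self_nonneg _)

private lemma diag_quad_key {n : Type*} [Fintype n] {lam : n → ℝ} {i : n}
    (hpos : ∀ j, j ≠ i → 0 < lam j) {c1 c2 : n → ℝ}
    (hcross : ∑ j, lam j * (c1 j * c2 j) = 0)
    (hneg : ∑ j, lam j * (c2 j * c2 j) < 0) :
    0 ≤ ∑ j, lam j * (c1 j * c1 j) := by
  by_contra h
  push_neg at h
  have hc1i : c1 i ≠ 0 := by
    intro h0
    exact absurd (diag_quad_nonneg hpos h0) (not_le.mpr h)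
  set t := c2 i / c1 i with ht
  have hdi : c2 i - t * c1 i = 0 := by rw [ht, div_mul_cancel₀ _ hc1i, sub_self]
  have h1 : 0 ≤ ∑ j, lam j * ((c2 j - t * c1 j) * (c2 j - t * c1 j)) :=
    diag_quad_nonneg hpos hdi
  have h2 : ∑ j, lam j * ((c2 j - t * c1 j) * (c2 j - t * c1 j))
      = (∑ j, lam j * (c2 j * c2 j)) - 2 * t * (∑ j, lam j * (c1 j * c2 j))
        + t * t * (∑ j, lam j * (c1 j * c1 j)) := by
    rw [Finset.mul_sum, Finset.mul_sum, ← Finset.sum_sub_distrib, ← Finset.sum_add_distrib]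
    exact Finset.sum_congr rfl fun j _ => by ring
  rw [h2, hcross] at h1
  nlinarith [mul_self_nonneg t]

private lemma quad_form_eq {n : Type*} [Fintype n] [DecidableEq n] {D : Matrix n n ℝ}
    (hD : D.IsHermitian) (v w : n → ℝ) :
    v ⬝ᵥ D *ᵥ w = ∑ j, hD.eigenvalues j *
      (((star (hD.eigenvectorUnitary : Matrix n n ℝ)) *ᵥ v) j *
       ((star (hD.eigenvectorUnitary : Matrix n n ℝ)) *ᵥ w) j) := by
  set U := (hD.eigenvectorUnitary : Matrix n n ℝ) with hU
  have hUs : star U = Uᵀ := by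
    ext i j; simp [Matrix.star_apply]
  conv_lhs => rw [hD.spectral_theorem, Unitary.conjStarAlgAut_apply]
  rw [← mulVec_mulVec, ← mulVec_mulVec, dotProduct_mulVec]
  have hvm : v ᵥ* U = star U *ᵥ v := by
    rw [hUs, mulVec_transpose]
  rw [hvm]
  simp [dotProduct, mulVec_diagonal, RCLike.ofReal_real_eq_id, Finset.mul_sum, mul_assoc,
    mul_comm, mul_left_comm]
  rfl

/-- If the symmetric block matrix `D = [[R, B], [Bᵀ, C]]` with invertible `C` has exactly
one negative eigenvalue (the rest positive), and the Schur complement has a negative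
eigenvalue, then `C` is positive definite. -/
theorem posDef_C_of_schur_neg_eigenvalue {nr nc : ℕ}
    (R : Matrix (Fin nr) (Fin nr) ℝ) (B : Matrix (Fin nr) (Fin nc) ℝ)
    (C : Matrix (Fin nc) (Fin nc) ℝ)
    (hD : (Matrix.fromBlocks R B Bᵀ C).IsHermitian)
    (hCinv : IsUnit C.det)
    (hone : ∃ i, hD.eigenvalues i < 0 ∧ ∀ j, j ≠ i → 0 < hD.eigenvalues j)
    (hcg : ∃ μ : ℝ, μ < 0 ∧ ∃ w : Fin nr → ℝ, w ≠ 0 ∧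
      (R - B * C⁻¹ * Bᵀ) *ᵥ w = μ • w) :
    C.PosDef := by
  obtain ⟨i, hi, hpos⟩ := hone
  obtain ⟨μ, hμ, w, hw, hschur⟩ := hcg
  have hC : C.IsHermitian := (isHermitian_fromBlocks_iff.mp hD).2.2.2
  -- the second block of the "Schur" vector
  set y : Fin nc → ℝ := -((C⁻¹ * Bᵀ) *ᵥ w) with hy
  set v2 : (Fin nr ⊕ Fin nc) → ℝ := Sum.elim w y with hv2
  have hCy : C *ᵥ y = -(Bᵀ *ᵥ w) := by
    rw [hy, mulVec_neg, mulVec_mulVec, ← Matrix.mul_assoc, mul_nonsing_inv _ hCinv, Matrix.one_mul]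
  have hBy : B *ᵥ y = -((B * C⁻¹ * Bᵀ) *ᵥ w) := by
    rw [hy, mulVec_neg, mulVec_mulVec, Matrix.mul_assoc]
  have hDv2 : (Matrix.fromBlocks R B Bᵀ C) *ᵥ v2 = Sum.elim (μ • w) 0 := by
    have h1 : R *ᵥ w + B *ᵥ y = μ • w := by
      rw [hBy, ← hschur, sub_mulVec]; abel
    have h2 : Bᵀ *ᵥ w + C *ᵥ y = 0 := by rw [hCy]; abel
    rw [hv2, fromBlocks_mulVec, Sum.elim_comp_inl, Sum.elim_comp_inr, h1, h2]
  have hwpos : 0 < w ⬝ᵥ w := by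
    have hnn : 0 ≤ w ⬝ᵥ w := Finset.sum_nonneg fun j _ => mul_self_nonneg _
    exact hnn.lt_of_ne (fun h => hw (dotProduct_self_eq_zero.mp h.symm))
  have hquad2 : v2 ⬝ᵥ (Matrix.fromBlocks R B Bᵀ C) *ᵥ v2 = μ * (w ⬝ᵥ w) := by
    rw [hDv2, hv2, sumElim_dotProduct_sumElim, dotProduct_zero, add_zero, dotProduct_smul,
      smul_eq_mul]
  have hneg2 : v2 ⬝ᵥ (Matrix.fromBlocks R B Bᵀ C) *ᵥ v2 < 0 := by
    rw [hquad2]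
    exact mul_neg_of_neg_of_pos hμ hwpos
  -- C is positive semidefinite
  have hsemi : C.PosSemidef := by
    refine .of_dotProduct_mulVec_nonneg hC fun x => ?_
    set v1 : (Fin nr ⊕ Fin nc) → ℝ := Sum.elim 0 x with hv1
    have hDv1 : (Matrix.fromBlocks R B Bᵀ C) *ᵥ v1 = Sum.elim (B *ᵥ x) (C *ᵥ x) := by
      rw [hv1, fromBlocks_mulVec, Sum.elim_comp_inl, Sum.elim_comp_inr, mulVec_zero,
        mulVec_zero, zero_add, zero_add]
    have hq1 : v1 ⬝ᵥ (Matrix.fromBlocks R B Bᵀ C) *ᵥ v1 = x ⬝ᵥ C *ᵥ x := by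
      rw [hDv1, hv1, sumElim_dotProduct_sumElim, zero_dotProduct, zero_add]
    have hcross : v1 ⬝ᵥ (Matrix.fromBlocks R B Bᵀ C) *ᵥ v2 = 0 := by
      rw [hDv2, hv1, sumElim_dotProduct_sumElim, zero_dotProduct, dotProduct_zero, add_zero]
    rw [quad_form_eq hD] at hcross hneg2
    have hkey := diag_quad_key hpos hcross hneg2
    rw [← quad_form_eq hD, hq1] at hkey
    simpa using hkey
  -- positive semidefinite + invertible ⇒ positive definite
  refine .of_dotProduct_mulVec_pos hC fun x hx => ?_
  rcases (hsemi.dotProduct_mulVec_nonneg x).lt_or_eq with h | h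
  · exact h
  · exfalso
    have h0 : C *ᵥ x = 0 := (hsemi.dotProduct_mulVec_zero_iff x).mp h.symm
    have hinj : Function.Injective C.mulVec :=
      mulVec_injective_iff_isUnit.mpr ((isUnit_iff_isUnit_det C).mpr hCinv)
    exact hx (hinj (by rw [h0, mulVec_zero]))
end

section
/- If a symmetric block matrix D = [[R, B], [B^T, C]] with invertible C has exactly one negative eigenvalue and the Schur complement D_cg = R - B C^{-1} B^T has a negative eigenvalue, then D_cg has exactly one negative eigenvalue and all its other eigenvalues are positive. -/
open Matrix

lemma quadform_eigen {n : Type*} [Fintype n] [DecidableEq n] {A : Matrix n n ℝ}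
    (hA : A.IsHermitian) (c : n → ℝ) :
    ((hA.eigenvectorUnitary : Matrix n n ℝ) *ᵥ c) ⬝ᵥ
      (A *ᵥ ((hA.eigenvectorUnitary : Matrix n n ℝ) *ᵥ c)) =
    ∑ k, hA.eigenvalues k * (c k)^2 := by
  set U : Matrix n n ℝ := (hA.eigenvectorUnitary : Matrix n n ℝ) with hU
  have hsU : star U * U = 1 := (Unitary.mem_iff.mp hA.eigenvectorUnitary.2).1
  have hT : Uᵀ = star U := by ext i j; simp [Matrix.star_apply]
  have hA' : A = U * diagonal hA.eigenvalues * star U := by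
    have := hA.spectral_theorem
    simpa using this
  have h1 : A *ᵥ (U *ᵥ c) = U *ᵥ (diagonal hA.eigenvalues *ᵥ c) := by
    conv_lhs => rw [hA']
    rw [← mulVec_mulVec, ← mulVec_mulVec,
      show star U *ᵥ (U *ᵥ c) = c from by rw [mulVec_mulVec, hsU, one_mulVec]]
  rw [h1]
  rw [dotProduct_mulVec, ← mulVec_transpose,
    show Uᵀ *ᵥ (U *ᵥ c) = c from by rw [mulVec_mulVec, hT, hsU, one_mulVec]]
  simp [dotProduct, mulVec_diagonal]
  exact Finset.sum_congr rfl fun x _ => by ring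

/-- If the symmetric block matrix `D` with invertible `C` has exactly one negative
eigenvalue and the Schur complement `D_cg` has a negative eigenvalue, then `D_cg` has
exactly one negative eigenvalue and all its other eigenvalues are positive. -/
theorem schur_exactly_one_neg_eigenvalue {nr nc : ℕ}
    (R : Matrix (Fin nr) (Fin nr) ℝ) (B : Matrix (Fin nr) (Fin nc) ℝ)
    (C : Matrix (Fin nc) (Fin nc) ℝ)
    (hD : (Matrix.fromBlocks R B Bᵀ C).IsHermitian)
    (hCinv : IsUnit C.det)
    (hDcg : (R - B * C⁻¹ * Bᵀ).IsHermitian)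
    (hone : ∃ i, hD.eigenvalues i < 0 ∧ ∀ j, j ≠ i → 0 < hD.eigenvalues j)
    (hcg : ∃ μ : ℝ, μ < 0 ∧ ∃ w : Fin nr → ℝ, w ≠ 0 ∧
      (R - B * C⁻¹ * Bᵀ) *ᵥ w = μ • w) :
    ∃ i, hDcg.eigenvalues i < 0 ∧ ∀ j, j ≠ i → 0 < hDcg.eigenvalues j := by
  obtain ⟨i0, hi0, hDpos⟩ := hone
  haveI : Invertible C := C.invertibleOfIsUnitDet hCinv
  -- determinant of D is nonzero
  have hdetD : (fromBlocks R B Bᵀ C).det ≠ 0 := by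
    rw [hD.det_eq_prod_eigenvalues]
    rw [Finset.prod_ne_zero_iff]
    intro k _
    rcases eq_or_ne k i0 with rfl | hk
    · simpa using hi0.ne
    · simpa using (hDpos k hk).ne'
  -- determinant of the Schur complement is nonzero
  have hdetS : (R - B * C⁻¹ * Bᵀ).det ≠ 0 := by
    have hd := det_fromBlocks₂₂ R B Bᵀ C
    rw [invOf_eq_nonsing_inv] at hd
    intro h
    exact hdetD (by rw [hd, h, mul_zero])
  -- all eigenvalues of the Schur complement are nonzero
  have hne : ∀ k, hDcg.eigenvalues k ≠ 0 := by
    intro k hk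
    apply hdetS
    rw [hDcg.det_eq_prod_eigenvalues]
    exact Finset.prod_eq_zero (Finset.mem_univ k) (by simp [hk])
  -- block quadratic form identity
  set P : Matrix (Fin nr ⊕ Fin nc) (Fin nr) ℝ :=
    fromRows (1 : Matrix (Fin nr) (Fin nr) ℝ) (-(C⁻¹ * Bᵀ)) with hP
  have hCC : C * C⁻¹ = 1 := mul_nonsing_inv C hCinv
  have hblock : ∀ w : Fin nr → ℝ,
      (P *ᵥ w) ⬝ᵥ (fromBlocks R B Bᵀ C *ᵥ (P *ᵥ w)) = w ⬝ᵥ ((R - B * C⁻¹ * Bᵀ) *ᵥ w) := by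
    intro w
    rw [hP, fromRows_mulVec, one_mulVec, fromBlocks_mulVec]
    simp only [Sum.elim_comp_inl, Sum.elim_comp_inr, sumElim_dotProduct_sumElim]
    have h2 : Bᵀ *ᵥ w + C *ᵥ ((-(C⁻¹ * Bᵀ)) *ᵥ w) = 0 := by
      rw [mulVec_mulVec, Matrix.mul_neg, ← Matrix.mul_assoc, hCC, Matrix.one_mul, neg_mulVec]
      exact add_neg_cancel _
    rw [h2, dotProduct_zero, add_zero, mulVec_mulVec, Matrix.mul_neg, neg_mulVec,
      ← Matrix.mul_assoc, sub_mulVec, dotProduct_add, dotProduct_sub, dotProduct_neg]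
    ring
  -- existence of a negative eigenvalue of the Schur complement
  have hexneg : ∃ i, hDcg.eigenvalues i < 0 := by
    by_contra h
    push_neg at h
    have hps := hDcg.posSemidef_iff_eigenvalues_nonneg.mpr (fun k => h k)
    obtain ⟨μ, hμ, w, hw, hSw⟩ := hcg
    have h1 := hps.dotProduct_mulVec_nonneg w
    rw [hSw] at h1
    have hww : 0 < w ⬝ᵥ w := by
      have := (dotProduct_star_self_pos_iff (v := w)).mpr hw
      simpa using this
    have : star w ⬝ᵥ μ • w = μ * (w ⬝ᵥ w) := by
      simp [dotProduct_smul, smul_eq_mul]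
    rw [this] at h1
    nlinarith
  -- at most one negative eigenvalue
  have hatmost : ∀ i j, i ≠ j → hDcg.eigenvalues i < 0 → hDcg.eigenvalues j < 0 → False := by
    intro i j hij hi hj
    set U : Matrix (Fin nr) (Fin nr) ℝ := (hDcg.eigenvectorUnitary : Matrix (Fin nr) (Fin nr) ℝ) with hU
    set UD : Matrix (Fin nr ⊕ Fin nc) (Fin nr ⊕ Fin nc) ℝ :=
      (hD.eigenvectorUnitary : Matrix (Fin nr ⊕ Fin nc) (Fin nr ⊕ Fin nc) ℝ) with hUD
    set M : Matrix (Fin nr ⊕ Fin nc) (Fin nr) ℝ := star UD * P * U with hM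
    set α : ℝ := (M *ᵥ Pi.single i 1) i0 with hα
    set β : ℝ := (M *ᵥ Pi.single j 1) i0 with hβ
    obtain ⟨a, b, hab, hab0⟩ : ∃ a b : ℝ, a * α + b * β = 0 ∧ ¬(a = 0 ∧ b = 0) := by
      by_cases h0 : α = 0
      · exact ⟨1, 0, by rw [h0]; ring, by simp⟩
      · exact ⟨β, -α, by ring, fun ⟨_, h2⟩ => h0 (by linarith [neg_eq_zero.mp h2])⟩
    set c : Fin nr → ℝ := a • (Pi.single i 1 : Fin nr → ℝ) + b • (Pi.single j 1 : Fin nr → ℝ) with hc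
    have hci : c i = a := by simp [hc, Pi.single_apply, hij, hij.symm]
    have hcj : c j = b := by simp [hc, Pi.single_apply, hij, hij.symm]
    have hck : ∀ k, k ≠ i → k ≠ j → c k = 0 := by
      intro k hki hkj
      simp [hc, Pi.single_apply, hki, hkj]
    set w : Fin nr → ℝ := U *ᵥ c with hw
    -- quadratic form of S on w is negative
    have hsum : w ⬝ᵥ ((R - B * C⁻¹ * Bᵀ) *ᵥ w) =
        hDcg.eigenvalues i * a ^ 2 + hDcg.eigenvalues j * b ^ 2 := by
      rw [hw, hU, quadform_eigen hDcg c]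
      rw [← Finset.sum_subset (Finset.subset_univ ({i, j} : Finset (Fin nr)))
        (fun k _ hk => by
          have hki : k ≠ i := fun h => hk (by simp [h])
          have hkj : k ≠ j := fun h => hk (by simp [h])
          rw [hck k hki hkj]; ring)]
      rw [Finset.sum_pair hij, hci, hcj]
    have hSneg : w ⬝ᵥ ((R - B * C⁻¹ * Bᵀ) *ᵥ w) < 0 := by
      rw [hsum]
      by_cases ha : a = 0
      · have hb : b ≠ 0 := fun h => hab0 ⟨ha, h⟩
        have : 0 < b ^ 2 := by positivity
        nlinarith
      · have : 0 < a ^ 2 := by positivity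
        nlinarith [sq_nonneg b]
    -- quadratic form of D on x := P *ᵥ w is nonnegative
    set x : Fin nr ⊕ Fin nc → ℝ := P *ᵥ w with hx
    set d : Fin nr ⊕ Fin nc → ℝ := star UD *ᵥ x with hd
    have hUDd : UD *ᵥ d = x := by
      rw [hd, mulVec_mulVec, (Unitary.mem_iff.mp hD.eigenvectorUnitary.2).2, one_mulVec]
    have hquadD : x ⬝ᵥ (fromBlocks R B Bᵀ C *ᵥ x) = ∑ k, hD.eigenvalues k * (d k) ^ 2 := by
      rw [← hUDd]
      exact quadform_eigen hD d
    have hd0 : d i0 = 0 := by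
      have : d = M *ᵥ c := by
        rw [hd, hx, hw, hM, ← mulVec_mulVec, ← mulVec_mulVec]
      rw [this, hc, mulVec_add, mulVec_smul, mulVec_smul]
      simp only [Pi.add_apply, Pi.smul_apply, smul_eq_mul]
      rw [← hα, ← hβ, hab]
    have hnonneg : 0 ≤ ∑ k, hD.eigenvalues k * (d k) ^ 2 := by
      apply Finset.sum_nonneg
      intro k _
      rcases eq_or_ne k i0 with rfl | hk
      · rw [hd0]; simp
      · exact mul_nonneg (hDpos k hk).le (sq_nonneg _)
    have := hblock w
    rw [← hx] at this
    rw [this] at hquadD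
    rw [hquadD] at hSneg
    linarith
  obtain ⟨ineg, hineg⟩ := hexneg
  refine ⟨ineg, hineg, fun j hj => ?_⟩
  rcases lt_trichotomy (hDcg.eigenvalues j) 0 with h | h | h
  · exact absurd (hatmost j ineg hj h hineg) (fun h => h)
  · exact absurd h (hne j)
  · exact h
end

section
/- Under the standing assumptions (D symmetric with exactly one negative eigenvalue λ_at, C invertible, D_cg = R - B C^{-1} B^T has a negative eigenvalue λ_cg), the negative eigenvalue of the Schur complement satisfies |λ_cg| ≥ |λ_at|, i.e., λ_cg ≤ λ_at < 0. -/
open Matrix Finset Module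
section Helpers
set_option linter.unusedSectionVars false
variable {n : Type*} [Fintype n] [DecidableEq n] {A : Matrix n n ℝ}

private lemma dot_eq_inner (x y : EuclideanSpace ℝ n) :
    (x : n → ℝ) ⬝ᵥ (y : n → ℝ) = (inner ℝ x y : ℝ) := by
  simp [PiLp.inner_apply, RCLike.inner_apply, dotProduct, mul_comm]

private lemma repr_dot (hA : A.IsHermitian) (x y : EuclideanSpace ℝ n) :
    (x : n → ℝ) ⬝ᵥ (y : n → ℝ)
      = ∑ i, hA.eigenvectorBasis.repr x i * hA.eigenvectorBasis.repr y i := by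
  rw [dot_eq_inner, ← hA.eigenvectorBasis.repr.inner_map_map x y]
  rw [PiLp.inner_apply]; simp [RCLike.inner_apply, mul_comm]

private lemma repr_mulVec (hA : A.IsHermitian) (x : EuclideanSpace ℝ n) (i : n) :
    hA.eigenvectorBasis.repr (WithLp.toLp 2 (A *ᵥ x)) i
      = hA.eigenvalues i * hA.eigenvectorBasis.repr x i := by
  rw [OrthonormalBasis.repr_apply_apply, OrthonormalBasis.repr_apply_apply,
    ← dot_eq_inner, ← dot_eq_inner]
  have hAT : Aᵀ = A := by
    have := hA.eq; rwa [conjTranspose_eq_transpose_of_trivial] at this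
  have h1 : (hA.eigenvectorBasis i : n → ℝ) ⬝ᵥ (A *ᵥ x)
      = (Aᵀ *ᵥ (hA.eigenvectorBasis i : n → ℝ)) ⬝ᵥ x := by
    rw [dotProduct_mulVec, mulVec_transpose]
  rw [h1, hAT]
  have h2 : A *ᵥ (hA.eigenvectorBasis i : n → ℝ)
      = hA.eigenvalues i • (hA.eigenvectorBasis i : n → ℝ) := hA.mulVec_eigenvectorBasis i
  rw [h2, smul_dotProduct]; rfl

private lemma form_eq (hA : A.IsHermitian) (x : EuclideanSpace ℝ n) :
    (x : n → ℝ) ⬝ᵥ (A *ᵥ x) = ∑ i, hA.eigenvalues i * (hA.eigenvectorBasis.repr x i)^2 := by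
  rw [repr_dot hA x (WithLp.toLp 2 (A *ᵥ x))]
  exact Finset.sum_congr rfl fun i _ => by rw [repr_mulVec hA x i]; ring

private lemma dot_self_eq (hA : A.IsHermitian) (x : EuclideanSpace ℝ n) :
    (x : n → ℝ) ⬝ᵥ (x : n → ℝ) = ∑ i, (hA.eigenvectorBasis.repr x i)^2 := by
  rw [repr_dot hA x x]; exact Finset.sum_congr rfl fun i _ => (sq _).symm

private lemma exists_eigenvalue (hA : A.IsHermitian) (lam : ℝ) (w : n → ℝ) (hw : w ≠ 0)
    (h : A *ᵥ w = lam • w) : ∃ i, hA.eigenvalues i = lam := by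
  have hw' : hA.eigenvectorBasis.repr (WithLp.toLp 2 w) ≠ 0 := by
    intro h0
    exact hw (by simpa using hA.eigenvectorBasis.repr.map_eq_zero_iff.mp h0)
  obtain ⟨i, hi⟩ := Function.ne_iff.mp
    (show (hA.eigenvectorBasis.repr (WithLp.toLp 2 w)).ofLp ≠ 0 from fun h => hw' (by simpa using h))
  refine ⟨i, ?_⟩
  have h1 := repr_mulVec hA (WithLp.toLp 2 w) i
  rw [h] at h1
  have h2 : hA.eigenvectorBasis.repr (WithLp.toLp 2 (lam • w)) i
      = lam * hA.eigenvectorBasis.repr (WithLp.toLp 2 w) i := by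
    rw [WithLp.toLp_smul, _root_.map_smul]; rfl
  rw [h2] at h1
  have : hA.eigenvectorBasis.repr (WithLp.toLp 2 w) i ≠ 0 := by simpa using hi
  field_simp at h1
  linarith
end Helpers
section Helpers2
set_option linter.unusedSectionVars false
variable {n : Type*} [Fintype n] [DecidableEq n] {A : Matrix n n ℝ}

noncomputable def spanEig (hA : A.IsHermitian) (t : Finset n) : Submodule ℝ (n → ℝ) :=
  Submodule.span ℝ ((fun i => (hA.eigenvectorBasis i : n → ℝ)) '' ↑t)

private lemma finrank_spanEig (hA : A.IsHermitian) (t : Finset n) :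
    finrank ℝ (spanEig hA t) = t.card := by
  classical
  have hli : LinearIndependent ℝ (fun i : {i // i ∈ t} => (hA.eigenvectorBasis i : n → ℝ)) := by
    have h0 : LinearIndependent ℝ (fun i : n => (hA.eigenvectorBasis i : n → ℝ)) :=
      hA.eigenvectorBasis.orthonormal.linearIndependent.map'
        (WithLp.linearEquiv 2 ℝ (n → ℝ)).toLinearMap (LinearEquiv.ker _)
    exact h0.comp Subtype.val Subtype.val_injective
  have himg : (fun i => (hA.eigenvectorBasis i : n → ℝ)) '' ↑t
      = Set.range (fun i : {i // i ∈ t} => (hA.eigenvectorBasis i : n → ℝ)) := by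
    ext x; simp [Set.mem_image, Set.mem_range]
  have := finrank_span_eq_card hli
  rw [Fintype.card_coe] at this
  rw [spanEig, himg]
  exact this

private lemma repr_eq_zero_of_mem (hA : A.IsHermitian) (t : Finset n) {x : n → ℝ}
    (hx : x ∈ spanEig hA t) {i : n} (hi : i ∉ t) :
    hA.eigenvectorBasis.repr (WithLp.toLp 2 x) i = 0 := by
  classical
  have : spanEig hA t ≤ LinearMap.ker
      ((LinearMap.proj i).comp
        ((WithLp.linearEquiv 2 ℝ (n → ℝ)).toLinearMap ∘ₗ
          hA.eigenvectorBasis.repr.toLinearEquiv.toLinearMap ∘ₗ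
          (WithLp.linearEquiv 2 ℝ (n → ℝ)).symm.toLinearMap)) := by
    rw [spanEig, Submodule.span_le]
    rintro _ ⟨j, hj, rfl⟩
    simp only [SetLike.mem_coe, LinearMap.mem_ker]
    show hA.eigenvectorBasis.repr (hA.eigenvectorBasis j) i = 0
    rw [hA.eigenvectorBasis.repr_self j]
    have hne : j ≠ i := fun h => hi (h ▸ hj)
    simp [EuclideanSpace.single_apply, hne.symm]
  exact this hx
end Helpers2

section Helpers3
set_option linter.unusedSectionVars false
variable {n : Type*} [Fintype n] [DecidableEq n] {A : Matrix n n ℝ}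

private lemma spanEig_form_ge (hA : A.IsHermitian) (t : Finset n) (c : ℝ)
    (ht : ∀ i ∈ t, c ≤ hA.eigenvalues i) {x : n → ℝ} (hx : x ∈ spanEig hA t) :
    c * (x ⬝ᵥ x) ≤ x ⬝ᵥ (A *ᵥ x) := by
  classical
  rw [form_eq hA (WithLp.toLp 2 x), dot_self_eq hA (WithLp.toLp 2 x), Finset.mul_sum]
  refine Finset.sum_le_sum fun i _ => ?_
  by_cases hi : i ∈ t
  · have := ht i hi
    nlinarith [sq_nonneg (hA.eigenvectorBasis.repr (WithLp.toLp 2 x) i)]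
  · rw [repr_eq_zero_of_mem hA t hx hi]; simp

private lemma spanEig_form_lt (hA : A.IsHermitian) (t : Finset n) (c : ℝ)
    (ht : ∀ i ∈ t, hA.eigenvalues i < c) {x : n → ℝ} (hx : x ∈ spanEig hA t) (hx0 : x ≠ 0) :
    x ⬝ᵥ (A *ᵥ x) < c * (x ⬝ᵥ x) := by
  classical
  rw [form_eq hA (WithLp.toLp 2 x), dot_self_eq hA (WithLp.toLp 2 x), Finset.mul_sum]
  have hne : ∃ i, hA.eigenvectorBasis.repr (WithLp.toLp 2 x) i ≠ 0 := by
    by_contra hcon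
    push_neg at hcon
    have : hA.eigenvectorBasis.repr (WithLp.toLp 2 x) = 0 := by
      ext i; exact hcon i
    exact hx0 (by simpa using hA.eigenvectorBasis.repr.map_eq_zero_iff.mp this)
  obtain ⟨i0, hi0⟩ := hne
  have hi0t : i0 ∈ t := by
    by_contra hmem
    exact hi0 (repr_eq_zero_of_mem hA t hx hmem)
  refine Finset.sum_lt_sum (fun i _ => ?_) ⟨i0, Finset.mem_univ i0, ?_⟩
  · by_cases hi : i ∈ t
    · have := ht i hi
      nlinarith [sq_nonneg (hA.eigenvectorBasis.repr (WithLp.toLp 2 x) i)]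
    · rw [repr_eq_zero_of_mem hA t hx hi]; simp
  · have h1 := ht i0 hi0t
    have h2 : 0 < (hA.eigenvectorBasis.repr (WithLp.toLp 2 x) i0)^2 := by positivity
    nlinarith

private lemma spanEig_form_nonpos (hA : A.IsHermitian) (t : Finset n)
    (ht : ∀ i ∈ t, hA.eigenvalues i < 0) {x : n → ℝ} (hx : x ∈ spanEig hA t) :
    x ⬝ᵥ (A *ᵥ x) ≤ 0 := by
  by_cases hx0 : x = 0
  · subst hx0; simp
  · have := spanEig_form_lt hA t 0 ht hx hx0
    have h2 : (0:ℝ) ≤ x ⬝ᵥ x := by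
      have : x ⬝ᵥ x = ∑ i, (x i)^2 := by simp [dotProduct, sq]
      rw [this]; positivity
    nlinarith

private lemma finrank_add_finrank_le {M : Type*} [AddCommGroup M] [Module ℝ M]
    [FiniteDimensional ℝ M] (V W : Submodule ℝ M) (h : ∀ x, x ∈ V → x ∈ W → x = 0) :
    finrank ℝ V + finrank ℝ W ≤ finrank ℝ M := by
  have hb : V ⊓ W = ⊥ := by
    rw [eq_bot_iff]
    intro x hx
    rw [Submodule.mem_bot]
    exact h x hx.1 hx.2
  rw [← Submodule.finrank_sup_add_finrank_inf_eq V W, hb, finrank_bot, add_zero]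
  exact Submodule.finrank_le _

private lemma dot_self_pos {x : n → ℝ} (hx : x ≠ 0) : 0 < x ⬝ᵥ x := by
  have h1 : x ⬝ᵥ x = ∑ i, (x i)^2 := by simp [dotProduct, sq]
  have h2 : ∃ i, x i ≠ 0 := Function.ne_iff.mp hx
  obtain ⟨i, hi⟩ := h2
  rw [h1]
  have : (0:ℝ) < (x i)^2 := by positivity
  exact Finset.sum_pos' (fun j _ => by positivity) ⟨i, Finset.mem_univ i, this⟩

private lemma finrank_le_card_eigen_lt (hA : A.IsHermitian) (c : ℝ) (V : Submodule ℝ (n → ℝ))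
    (hV : ∀ x ∈ V, x ≠ 0 → x ⬝ᵥ (A *ᵥ x) < c * (x ⬝ᵥ x)) :
    finrank ℝ V ≤ (univ.filter fun i => hA.eigenvalues i < c).card := by
  classical
  set t := univ.filter fun i => ¬ hA.eigenvalues i < c with ht
  have hdisj : ∀ x, x ∈ V → x ∈ spanEig hA t → x = 0 := by
    intro x hxV hxW
    by_contra hx0
    have h1 := hV x hxV hx0
    have h2 := spanEig_form_ge hA t c (fun i hi => le_of_not_gt (by simpa [ht] using hi)) hxW
    linarith
  have := finrank_add_finrank_le V (spanEig hA t) hdisj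
  rw [finrank_spanEig, Module.finrank_fintype_fun_eq_card] at this
  have hcard := Finset.card_filter_add_card_filter_not
    (s := (univ : Finset n)) (p := fun i => hA.eigenvalues i < c)
  rw [Finset.card_univ] at hcard
  have hbe : t.card = (univ.filter fun a => ¬ hA.eigenvalues a < c).card := rfl
  omega
end Helpers3

section SumSpace
set_option linter.unusedSectionVars false
variable {a b : Type*} [Fintype a] [Fintype b] [DecidableEq a] [DecidableEq b]

def inlL : (a → ℝ) →ₗ[ℝ] (a ⊕ b → ℝ) where
  toFun w := Sum.elim w 0
  map_add' x y := by funext s; cases s <;> simp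
  map_smul' c x := by funext s; cases s <;> simp

def inrL : (b → ℝ) →ₗ[ℝ] (a ⊕ b → ℝ) where
  toFun z := Sum.elim 0 z
  map_add' x y := by funext s; cases s <;> simp
  map_smul' c x := by funext s; cases s <;> simp

private lemma inlL_injective : Function.Injective (inlL : (a → ℝ) →ₗ[ℝ] (a ⊕ b → ℝ)) := by
  intro x y h
  funext i
  exact congrFun h (Sum.inl i)

private lemma inrL_injective : Function.Injective (inrL : (b → ℝ) →ₗ[ℝ] (a ⊕ b → ℝ)) := by
  intro x y h
  funext j
  exact congrFun h (Sum.inr j)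

private lemma mem_sup_decomp (P : Submodule ℝ (a → ℝ)) (Q : Submodule ℝ (b → ℝ))
    {u : a ⊕ b → ℝ} (hu : u ∈ P.map (inlL : (a → ℝ) →ₗ[ℝ] _) ⊔ Q.map inrL) :
    ∃ w ∈ P, ∃ z ∈ Q, u = Sum.elim w z := by
  rw [Submodule.mem_sup] at hu
  obtain ⟨y, hy, z, hz, rfl⟩ := hu
  obtain ⟨w, hw, rfl⟩ := hy
  obtain ⟨q, hq, rfl⟩ := hz
  refine ⟨w, hw, q, hq, ?_⟩
  funext s; cases s <;> simp [inlL, inrL]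

private lemma finrank_map_sup (P : Submodule ℝ (a → ℝ)) (Q : Submodule ℝ (b → ℝ)) :
    finrank ℝ (P.map (inlL : (a → ℝ) →ₗ[ℝ] (a ⊕ b → ℝ)) ⊔ Q.map inrL : Submodule ℝ (a ⊕ b → ℝ))
      = finrank ℝ P + finrank ℝ Q := by
  have h1 : finrank ℝ (P.map (inlL : (a → ℝ) →ₗ[ℝ] (a ⊕ b → ℝ))) = finrank ℝ P :=
    (P.equivMapOfInjective _ inlL_injective).finrank_eq.symm
  have h2 : finrank ℝ (Q.map (inrL : (b → ℝ) →ₗ[ℝ] (a ⊕ b → ℝ))) = finrank ℝ Q :=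
    (Q.equivMapOfInjective _ inrL_injective).finrank_eq.symm
  have hinf : P.map (inlL : (a → ℝ) →ₗ[ℝ] (a ⊕ b → ℝ)) ⊓ Q.map inrL = ⊥ := by
    rw [eq_bot_iff]
    rintro u ⟨hu1, hu2⟩
    obtain ⟨w, _, hw⟩ := hu1
    obtain ⟨q, _, hq⟩ := hu2
    rw [Submodule.mem_bot]
    funext s
    cases s with
    | inl i => rw [← hq]; simp [inrL]
    | inr j => rw [← hw]; simp [inlL]
  rw [← h1, ← h2, ← Submodule.finrank_sup_add_finrank_inf_eq, hinf, finrank_bot, add_zero]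

/-- shear map: `u ↦ fun | inl i => u (inl i) | inr j => u (inr j) + (M *ᵥ u∘inl) j`. -/
noncomputable def shearL (M : Matrix b a ℝ) : (a ⊕ b → ℝ) →ₗ[ℝ] (a ⊕ b → ℝ) :=
  LinearMap.id + (inrL : (b → ℝ) →ₗ[ℝ] _) ∘ₗ M.mulVecLin ∘ₗ LinearMap.funLeft ℝ ℝ Sum.inl

private lemma shearL_apply (M : Matrix b a ℝ) (x : a → ℝ) (y : b → ℝ) :
    shearL M (Sum.elim x y) = Sum.elim x (y + M *ᵥ x) := by
  funext s
  cases s with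
  | inl i => simp [shearL, inlL, inrL, LinearMap.funLeft]
  | inr j =>
      simp [shearL, inlL, inrL, LinearMap.funLeft]

private lemma shearL_inv (M : Matrix b a ℝ) (u : a ⊕ b → ℝ) :
    shearL (-M) (shearL M u) = u := by
  funext s
  cases s with
  | inl i => simp [shearL, inlL, inrL, LinearMap.funLeft]
  | inr j =>
      have hcomp : (u + Sum.elim (0 : a → ℝ) (M *ᵥ (u ∘ Sum.inl))) ∘ Sum.inl = u ∘ Sum.inl := by
        funext i; simp
      simp [shearL, inlL, inrL, LinearMap.funLeft, neg_mulVec, hcomp]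

private lemma shearL_injective (M : Matrix b a ℝ) : Function.Injective (shearL M) :=
  Function.LeftInverse.injective (g := shearL (-M)) (shearL_inv M)

end SumSpace

section Key
set_option linter.unusedSectionVars false
variable {nr nc : ℕ}

private lemma dot_self_nonneg' {n : Type*} [Fintype n] (x : n → ℝ) : 0 ≤ x ⬝ᵥ x := by
  have h1 : x ⬝ᵥ x = ∑ i, (x i)^2 := by simp [dotProduct, sq]
  rw [h1]; positivity

private lemma key_id (R : Matrix (Fin nr) (Fin nr) ℝ) (B : Matrix (Fin nr) (Fin nc) ℝ)
    (C : Matrix (Fin nc) (Fin nc) ℝ) (hCsym : Cᵀ = C) (hCC : C * C⁻¹ = 1)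
    (w : Fin nr → ℝ) (z : Fin nc → ℝ) :
    (Sum.elim w (z - (C⁻¹ * Bᵀ) *ᵥ w)) ⬝ᵥ
      (fromBlocks R B Bᵀ C *ᵥ (Sum.elim w (z - (C⁻¹ * Bᵀ) *ᵥ w)))
      = w ⬝ᵥ ((R - B * C⁻¹ * Bᵀ) *ᵥ w) + z ⬝ᵥ (C *ᵥ z) := by
  set v : Fin nc → ℝ := (C⁻¹ * Bᵀ) *ᵥ w with hv
  have hCv : C *ᵥ v = Bᵀ *ᵥ w := by
    rw [hv, mulVec_mulVec, ← Matrix.mul_assoc, hCC, Matrix.one_mul]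
  have hswapB : ∀ x : Fin nc → ℝ, x ⬝ᵥ (Bᵀ *ᵥ w) = w ⬝ᵥ (B *ᵥ x) := by
    intro x
    rw [dotProduct_mulVec, vecMul_transpose, dotProduct_comm]
  have hswapC : ∀ x y : Fin nc → ℝ, x ⬝ᵥ (C *ᵥ y) = y ⬝ᵥ (C *ᵥ x) := by
    intro x y
    conv_lhs => rw [dotProduct_mulVec, ← hCsym, vecMul_transpose]
    exact dotProduct_comm _ _
  have h6 : (B * C⁻¹ * Bᵀ) *ᵥ w = B *ᵥ v := by
    rw [hv, mulVec_mulVec, Matrix.mul_assoc]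
  rw [fromBlocks_mulVec, sumElim_dotProduct_sumElim]
  simp only [Sum.elim_comp_inl, Sum.elim_comp_inr, mulVec_sub, dotProduct_sub,
    sub_dotProduct, dotProduct_add, add_dotProduct, sub_mulVec]
  have e1 : z ⬝ᵥ (Bᵀ *ᵥ w) = w ⬝ᵥ (B *ᵥ z) := hswapB z
  have e2 : v ⬝ᵥ (Bᵀ *ᵥ w) = w ⬝ᵥ (B *ᵥ v) := hswapB v
  have e3 : z ⬝ᵥ (C *ᵥ v) = z ⬝ᵥ (Bᵀ *ᵥ w) := by rw [hCv]
  have e4 : v ⬝ᵥ (C *ᵥ z) = z ⬝ᵥ (C *ᵥ v) := hswapC v z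
  have e5 : v ⬝ᵥ (C *ᵥ v) = v ⬝ᵥ (Bᵀ *ᵥ w) := by rw [hCv]
  have e6 : w ⬝ᵥ ((B * C⁻¹ * Bᵀ) *ᵥ w) = w ⬝ᵥ (B *ᵥ v) := by rw [h6]
  linarith [e1, e2, e3, e4, e5, e6]

private lemma exists_cutoff {ι : Type*} [Fintype ι] [DecidableEq ι] (ν : ι → ℝ) (r : ℝ) :
    ∃ c, r < c ∧ ∀ i, (ν i < c ↔ ν i ≤ r) := by
  classical
  by_cases h : (univ.filter fun i => r < ν i).Nonempty
  · have himg : ((univ.filter fun i => r < ν i).image ν).Nonempty := h.image ν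
    set c := ((univ.filter fun i => r < ν i).image ν).min' himg with hc
    have hrc : r < c := by
      obtain ⟨i, hi, hmin⟩ := Finset.mem_image.mp (Finset.min'_mem _ himg)
      have h2 : r < ν i := (Finset.mem_filter.mp hi).2
      rw [hc, ← hmin]; exact h2
    refine ⟨c, hrc, fun i => ⟨?_, fun h2 => lt_of_le_of_lt h2 hrc⟩⟩
    intro hlt
    by_contra hgt
    push_neg at hgt
    have hi : ν i ∈ (univ.filter fun i => r < ν i).image ν :=
      Finset.mem_image.mpr ⟨i, Finset.mem_filter.mpr ⟨Finset.mem_univ i, hgt⟩, rfl⟩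
    have := Finset.min'_le _ _ hi
    rw [← hc] at this
    linarith
  · refine ⟨r + 1, by linarith, fun i => ?_⟩
    have : ¬ r < ν i := by
      intro hri
      exact h ⟨i, Finset.mem_filter.mpr ⟨Finset.mem_univ i, hri⟩⟩
    constructor <;> intro <;> linarith [le_of_not_gt this]
end Key

/-- The negative eigenvalue of the Schur complement satisfies `|λ_cg| ≥ |λ_at|`,
i.e. `λ_cg ≤ λ_at < 0`. -/
theorem schur_neg_eigenvalue_le {nr nc : ℕ}
    (R : Matrix (Fin nr) (Fin nr) ℝ) (B : Matrix (Fin nr) (Fin nc) ℝ)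
    (C : Matrix (Fin nc) (Fin nc) ℝ)
    (hD : (Matrix.fromBlocks R B Bᵀ C).IsHermitian)
    (hCinv : IsUnit C.det)
    (lamAt lamCg : ℝ)
    (hAtNeg : lamAt < 0)
    (hAtEig : ∃ u : Fin nr ⊕ Fin nc → ℝ, u ≠ 0 ∧
      (Matrix.fromBlocks R B Bᵀ C) *ᵥ u = lamAt • u)
    (hAtOnly : ∀ (μ : ℝ) (u : Fin nr ⊕ Fin nc → ℝ), u ≠ 0 →
      (Matrix.fromBlocks R B Bᵀ C) *ᵥ u = μ • u → μ = lamAt ∨ 0 < μ)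
    (hCgNeg : lamCg < 0)
    (hCgEig : ∃ w : Fin nr → ℝ, w ≠ 0 ∧ (R - B * C⁻¹ * Bᵀ) *ᵥ w = lamCg • w) :
    lamCg ≤ lamAt ∧ lamAt < 0 := by
  classical
  refine ⟨?_, hAtNeg⟩
  -- basic symmetry facts
  have hDT : (Matrix.fromBlocks R B Bᵀ C)ᵀ = Matrix.fromBlocks R B Bᵀ C := by
    have := hD.eq
    rwa [conjTranspose_eq_transpose_of_trivial] at this
  have hCsym : Cᵀ = C := by
    have := congrArg Matrix.toBlocks₂₂ hDT
    simpa [Matrix.fromBlocks_transpose] using this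
  have hRsym : Rᵀ = R := by
    have := congrArg Matrix.toBlocks₁₁ hDT
    simpa [Matrix.fromBlocks_transpose] using this
  have hCC : C * C⁻¹ = 1 := Matrix.mul_nonsing_inv C hCinv
  have hCiT : C⁻¹ᵀ = C⁻¹ := by
    rw [Matrix.transpose_nonsing_inv, hCsym]
  have hCH : C.IsHermitian := by
    show Cᴴ = C
    rw [conjTranspose_eq_transpose_of_trivial, hCsym]
  have hDcgH : (R - B * C⁻¹ * Bᵀ).IsHermitian := by
    show _ᴴ = _
    rw [conjTranspose_eq_transpose_of_trivial, Matrix.transpose_sub, hRsym,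
      Matrix.transpose_mul, Matrix.transpose_mul, Matrix.transpose_transpose, hCiT,
      Matrix.mul_assoc]
  -- eigenvalue families
  obtain ⟨cs, hcs1, hcs2⟩ := exists_cutoff hDcgH.eigenvalues lamAt
  set μD := hD.eigenvalues with hμD
  set ν := hDcgH.eigenvalues with hν
  set γ := hCH.eigenvalues with hγ
  set k := (univ.filter fun j => μD j < 0).card with hk
  set s := (univ.filter fun i => ν i < 0).card with hs
  set c0 := (univ.filter fun m => γ m < 0).card with hc0
  set tt := (univ.filter fun i => ν i ≤ lamAt).card with htt
  -- Step A : s + c0 ≤ k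
  have stepA : s + c0 ≤ k := by
    set P := spanEig hDcgH (univ.filter fun i => ν i < 0) with hP
    set Q := spanEig hCH (univ.filter fun m => γ m < 0) with hQ
    set M := C⁻¹ * Bᵀ with hM
    set V1 := (P.map (inlL : (Fin nr → ℝ) →ₗ[ℝ] _) ⊔ Q.map inrL).map (shearL (-M)) with hV1
    have hfr : finrank ℝ V1 = s + c0 := by
      rw [hV1]
      rw [((P.map (inlL : (Fin nr → ℝ) →ₗ[ℝ] _) ⊔ Q.map inrL).equivMapOfInjective _
        (shearL_injective (-M))).finrank_eq.symm]
      rw [finrank_map_sup, hP, hQ, finrank_spanEig, finrank_spanEig]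
    have hform : ∀ x ∈ V1, x ≠ 0 →
        x ⬝ᵥ ((Matrix.fromBlocks R B Bᵀ C) *ᵥ x) < 0 * (x ⬝ᵥ x) := by
      intro x hx hx0
      obtain ⟨u, hu, rfl⟩ := hx
      obtain ⟨w, hw, z, hz, rfl⟩ := mem_sup_decomp P Q hu
      have hrw : shearL (-M) (Sum.elim w z) = Sum.elim w (z - M *ᵥ w) := by
        rw [shearL_apply, Matrix.neg_mulVec, sub_eq_add_neg]
      rw [hrw, zero_mul, key_id R B C hCsym hCC w z]
      have hwnonpos : w ⬝ᵥ ((R - B * C⁻¹ * Bᵀ) *ᵥ w) ≤ 0 :=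
        spanEig_form_nonpos hDcgH _ (fun i hi => by simpa using (Finset.mem_filter.mp hi).2) hw
      have hznonpos : z ⬝ᵥ (C *ᵥ z) ≤ 0 :=
        spanEig_form_nonpos hCH _ (fun m hm => by simpa using (Finset.mem_filter.mp hm).2) hz
      have hne : w ≠ 0 ∨ z ≠ 0 := by
        by_contra hcon
        push_neg at hcon
        obtain ⟨rfl, rfl⟩ := hcon
        apply hx0
        have : (Sum.elim (0 : Fin nr → ℝ) (0 : Fin nc → ℝ)) = 0 := by
          funext s'; cases s' <;> rfl
        rw [this, map_zero]
      rcases hne with hw0 | hz0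
      · have := spanEig_form_lt hDcgH _ 0
          (fun i hi => by simpa using (Finset.mem_filter.mp hi).2) hw hw0
        rw [zero_mul] at this
        linarith
      · have := spanEig_form_lt hCH _ 0
          (fun m hm => by simpa using (Finset.mem_filter.mp hm).2) hz hz0
        rw [zero_mul] at this
        linarith
    have := finrank_le_card_eigen_lt hD 0 V1 hform
    rw [hfr] at this
    exact this
  -- Step B : k ≤ tt + c0
  have stepB : k ≤ tt + c0 := by
    set M := C⁻¹ * Bᵀ with hM
    set E := spanEig hD (univ.filter fun j => μD j < 0) with hE
    have hEeig : ∀ u : Fin nr ⊕ Fin nc → ℝ, u ∈ E →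
        (Matrix.fromBlocks R B Bᵀ C) *ᵥ u = lamAt • u := by
      intro u hu
      have hsub : E ≤ LinearMap.ker
          ((Matrix.fromBlocks R B Bᵀ C).mulVecLin - lamAt • LinearMap.id) := by
        rw [hE, spanEig, Submodule.span_le]
        rintro _ ⟨j, hj, rfl⟩
        have hj' : μD j < 0 := by simpa using hj
        have heig : (Matrix.fromBlocks R B Bᵀ C) *ᵥ
            (hD.eigenvectorBasis j : Fin nr ⊕ Fin nc → ℝ)
            = μD j • (hD.eigenvectorBasis j : Fin nr ⊕ Fin nc → ℝ) :=
          hD.mulVec_eigenvectorBasis j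
        have hne : (hD.eigenvectorBasis j : Fin nr ⊕ Fin nc → ℝ) ≠ 0 := by
          intro h0
          exact hD.eigenvectorBasis.orthonormal.ne_zero j (by simpa using h0)
        rcases hAtOnly (μD j) _ hne heig with hcase | hcase
        · simp only [SetLike.mem_coe, LinearMap.mem_ker, LinearMap.sub_apply,
            LinearMap.smul_apply, LinearMap.id_apply]
          rw [Matrix.mulVecLin_apply, heig, hcase, sub_self]
        · linarith
      have h2 := hsub hu
      simp only [LinearMap.mem_ker, LinearMap.sub_apply, LinearMap.smul_apply,
        LinearMap.id_apply, Matrix.mulVecLin_apply, sub_eq_zero] at h2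
      exact h2
    set V2 := E.map (shearL M) with hV2
    have hfr2 : finrank ℝ V2 = k := by
      rw [hV2, (E.equivMapOfInjective _ (shearL_injective M)).finrank_eq.symm, hE,
        finrank_spanEig]
    set Wstar := (spanEig hDcgH (univ.filter fun i => ¬ ν i < cs)).map
        (inlL : (Fin nr → ℝ) →ₗ[ℝ] _)
      ⊔ (spanEig hCH (univ.filter fun m => ¬ γ m < 0)).map inrL with hWstar
    have hdisj : ∀ x, x ∈ V2 → x ∈ Wstar → x = 0 := by
      intro x hxV hxW
      obtain ⟨u, huE, rfl⟩ := hxV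
      obtain ⟨p, hp, q, hq, hpq⟩ := mem_sup_decomp _ _ hxW
      have hu : u = Sum.elim p (q - M *ᵥ p) := by
        have h3 := shearL_inv M u
        rw [hpq] at h3
        rw [← h3, shearL_apply, Matrix.neg_mulVec, sub_eq_add_neg]
      by_contra hx0
      have hu0 : u ≠ 0 := fun h => hx0 (by rw [h, map_zero])
      have hupos : 0 < u ⬝ᵥ u := dot_self_pos hu0
      have hformD : u ⬝ᵥ ((Matrix.fromBlocks R B Bᵀ C) *ᵥ u)
          = p ⬝ᵥ ((R - B * C⁻¹ * Bᵀ) *ᵥ p) + q ⬝ᵥ (C *ᵥ q) := by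
        rw [hu]; exact key_id R B C hCsym hCC p q
      have hformL : u ⬝ᵥ ((Matrix.fromBlocks R B Bᵀ C) *ᵥ u) = lamAt * (u ⬝ᵥ u) := by
        rw [hEeig u huE, dotProduct_smul]; rfl
      have hbq : 0 ≤ q ⬝ᵥ (C *ᵥ q) := by
        have := spanEig_form_ge hCH _ 0
          (fun m hm => le_of_not_gt (by simpa using (Finset.mem_filter.mp hm).2)) hq
        rw [zero_mul] at this
        exact this
      by_cases hp0 : p = 0
      · have hfirst : p ⬝ᵥ ((R - B * C⁻¹ * Bᵀ) *ᵥ p) = 0 := by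
          rw [hp0, zero_dotProduct]
        nlinarith
      · have hppos : 0 < p ⬝ᵥ p := dot_self_pos hp0
        have hbp : cs * (p ⬝ᵥ p) ≤ p ⬝ᵥ ((R - B * C⁻¹ * Bᵀ) *ᵥ p) :=
          spanEig_form_ge hDcgH _ cs
            (fun i hi => le_of_not_gt (by simpa using (Finset.mem_filter.mp hi).2)) hp
        have huge : p ⬝ᵥ p ≤ u ⬝ᵥ u := by
          rw [hu, sumElim_dotProduct_sumElim]
          have := dot_self_nonneg' (q - M *ᵥ p)
          linarith
        nlinarith
    have hle := finrank_add_finrank_le V2 Wstar hdisj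
    rw [hfr2, hWstar, finrank_map_sup, finrank_spanEig, finrank_spanEig,
      Module.finrank_fintype_fun_eq_card] at hle
    have hcard1 := Finset.card_filter_add_card_filter_not
      (s := (univ : Finset (Fin nr))) (p := fun i => ν i < cs)
    have hcard2 := Finset.card_filter_add_card_filter_not
      (s := (univ : Finset (Fin nc))) (p := fun m => γ m < 0)
    have hconv : (univ.filter fun i => ν i < cs) = (univ.filter fun i => ν i ≤ lamAt) :=
      Finset.filter_congr fun i _ => by rw [hcs2 i]
    rw [hconv] at hcard1
    have hcardsum : Fintype.card (Fin nr ⊕ Fin nc) = nr + nc := by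
      simp [Fintype.card_sum]
    rw [hcardsum] at hle
    simp only [Finset.card_univ, Fintype.card_fin] at hcard1 hcard2
    omega
  -- combine
  have hsub : (univ.filter fun i => ν i ≤ lamAt) ⊆ (univ.filter fun i => ν i < 0) := by
    intro i hi
    have := (Finset.mem_filter.mp hi).2
    exact Finset.mem_filter.mpr ⟨Finset.mem_univ i, by linarith⟩
  have hts : tt ≤ s := Finset.card_le_card hsub
  have hseq : (univ.filter fun i => ν i ≤ lamAt) = (univ.filter fun i => ν i < 0) :=
    Finset.eq_of_subset_of_card_le hsub (by omega)
  obtain ⟨w, hw0, hweig⟩ := hCgEig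
  obtain ⟨i, hi⟩ := exists_eigenvalue hDcgH lamCg w hw0 hweig
  have hmem : i ∈ univ.filter fun i => ν i < 0 := by
    refine Finset.mem_filter.mpr ⟨Finset.mem_univ i, ?_⟩
    rw [hν, hi]
    exact hCgNeg
  rw [← hseq] at hmem
  have := (Finset.mem_filter.mp hmem).2
  rw [hν, hi] at this
  exact this
end

section
/- Cauchy's interlacing theorem: if S is a symmetric n×n matrix with eigenvalues σ_1 ≤ ... ≤ σ_n and T is the leading principal m×m submatrix of S (m < n) with eigenvalues τ_1 ≤ ... ≤ τ_m, then σ_j ≤ τ_j ≤ σ_{n-m+j} for all 1 ≤ j ≤ m. -/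
open Matrix Module Submodule

section CauchyInterlacingAux

lemma sum_dotProduct' {k l : ℕ} (f : Fin l → (Fin k → ℝ)) (w : Fin k → ℝ) :
    (∑ i, f i) ⬝ᵥ w = ∑ i, f i ⬝ᵥ w := by
  simp only [dotProduct, Finset.sum_apply, Finset.sum_mul]
  exact Finset.sum_comm

lemma dotProduct_sum' {k l : ℕ} (w : Fin k → ℝ) (f : Fin l → (Fin k → ℝ)) :
    w ⬝ᵥ (∑ i, f i) = ∑ i, w ⬝ᵥ f i := by
  simp only [dotProduct, Finset.sum_apply, Finset.mul_sum]
  exact Finset.sum_comm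

/-- The eigenvector basis of a real symmetric matrix, as a basis of the plain
function space `Fin k → ℝ`. -/
noncomputable def evB {k : ℕ} (A : Matrix (Fin k) (Fin k) ℝ) (hA : A.IsHermitian) :
    Basis (Fin k) ℝ (Fin k → ℝ) :=
  hA.eigenvectorBasis.toBasis.map (WithLp.linearEquiv 2 ℝ (Fin k → ℝ))

lemma evB_mulVec {k : ℕ} (A : Matrix (Fin k) (Fin k) ℝ) (hA : A.IsHermitian) (j : Fin k) :
    A *ᵥ (evB A hA j) = hA.eigenvalues j • (evB A hA j) := by
  have := hA.mulVec_eigenvectorBasis j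
  simp [evB, this]

lemma evB_dot {k : ℕ} (A : Matrix (Fin k) (Fin k) ℝ) (hA : A.IsHermitian) (i j : Fin k) :
    (evB A hA i) ⬝ᵥ (evB A hA j) = if i = j then 1 else 0 := by
  have h := hA.eigenvectorBasis.orthonormal
  rw [orthonormal_iff_ite] at h
  rw [← h i j]
  simp [evB, PiLp.inner_apply, dotProduct, RCLike.inner_apply]
  exact Finset.sum_congr rfl fun _ _ => mul_comm _ _

lemma dot_expand {k : ℕ} (A : Matrix (Fin k) (Fin k) ℝ) (hA : A.IsHermitian)
    (c d : Fin k → ℝ) :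
    (∑ i, c i • evB A hA i) ⬝ᵥ (∑ j, d j • evB A hA j) = ∑ i, c i * d i := by
  rw [sum_dotProduct']
  have : ∀ i, (c i • evB A hA i) ⬝ᵥ (∑ j, d j • evB A hA j)
      = ∑ j, (c i * d j) * ((evB A hA i) ⬝ᵥ (evB A hA j)) := by
    intro i
    rw [smul_dotProduct, dotProduct_sum', Finset.smul_sum]
    refine Finset.sum_congr rfl fun j _ => ?_
    rw [dotProduct_smul]
    simp [smul_eq_mul]; ring
  simp only [this, evB_dot]
  simp

lemma quad_formula {k : ℕ} (A : Matrix (Fin k) (Fin k) ℝ) (hA : A.IsHermitian)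
    (x : Fin k → ℝ) :
    x ⬝ᵥ (A *ᵥ x) = ∑ i, hA.eigenvalues i * ((evB A hA).repr x i)^2 := by
  set B := evB A hA with hB
  set c := fun i => B.repr x i with hc
  have hx : x = ∑ i, c i • B i := (B.sum_repr x).symm
  have h1 : A *ᵥ (∑ j, c j • B j) = ∑ j, (hA.eigenvalues j * c j) • B j := by
    rw [← mulVecLin_apply, map_sum]
    refine Finset.sum_congr rfl fun j _ => ?_
    rw [LinearMap.map_smul, mulVecLin_apply, evB_mulVec]
    rw [smul_smul, mul_comm]
  calc x ⬝ᵥ (A *ᵥ x) = (∑ i, c i • B i) ⬝ᵥ (∑ j, (hA.eigenvalues j * c j) • B j) := by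
        rw [hx, h1, ← hx]
    _ = ∑ i, c i * (hA.eigenvalues i * c i) := dot_expand A hA c _
    _ = ∑ i, hA.eigenvalues i * (c i)^2 := by
        refine Finset.sum_congr rfl fun i _ => ?_; ring

lemma dot_formula {k : ℕ} (A : Matrix (Fin k) (Fin k) ℝ) (hA : A.IsHermitian)
    (x : Fin k → ℝ) :
    x ⬝ᵥ x = ∑ i, ((evB A hA).repr x i)^2 := by
  set B := evB A hA with hB
  set c := fun i => B.repr x i with hc
  have hx : x = ∑ i, c i • B i := (B.sum_repr x).symm
  calc x ⬝ᵥ x = (∑ i, c i • B i) ⬝ᵥ (∑ j, c j • B j) := by rw [← hx]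
    _ = ∑ i, c i * c i := dot_expand A hA c c
    _ = ∑ i, (c i)^2 := by simp [pow_two]

lemma quad_le {k : ℕ} (A : Matrix (Fin k) (Fin k) ℝ) (hA : A.IsHermitian)
    (t : Finset (Fin k)) (c : ℝ) (hc : ∀ i ∈ t, hA.eigenvalues i ≤ c)
    (x : Fin k → ℝ) (hx : x ∈ span ℝ ((evB A hA) '' t)) :
    x ⬝ᵥ (A *ᵥ x) ≤ c * (x ⬝ᵥ x) := by
  have hsupp : ∀ i, i ∉ t → (evB A hA).repr x i = 0 := by
    intro i hi
    have := (Basis.mem_span_image (b := evB A hA)).1 hx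
    by_contra h
    exact hi (this (Finsupp.mem_support_iff.2 h))
  rw [quad_formula A hA, dot_formula A hA, Finset.mul_sum]
  refine Finset.sum_le_sum fun i _ => ?_
  by_cases hi : i ∈ t
  · have h2 : (0:ℝ) ≤ ((evB A hA).repr x i)^2 := sq_nonneg _
    exact mul_le_mul_of_nonneg_right (hc i hi) h2
  · rw [hsupp i hi]; simp

lemma quad_ge {k : ℕ} (A : Matrix (Fin k) (Fin k) ℝ) (hA : A.IsHermitian)
    (t : Finset (Fin k)) (c : ℝ) (hc : ∀ i ∈ t, c ≤ hA.eigenvalues i)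
    (x : Fin k → ℝ) (hx : x ∈ span ℝ ((evB A hA) '' t)) :
    c * (x ⬝ᵥ x) ≤ x ⬝ᵥ (A *ᵥ x) := by
  have hsupp : ∀ i, i ∉ t → (evB A hA).repr x i = 0 := by
    intro i hi
    have := (Basis.mem_span_image (b := evB A hA)).1 hx
    by_contra h
    exact hi (this (Finsupp.mem_support_iff.2 h))
  rw [quad_formula A hA, dot_formula A hA, Finset.mul_sum]
  refine Finset.sum_le_sum fun i _ => ?_
  by_cases hi : i ∈ t
  · have h2 : (0:ℝ) ≤ ((evB A hA).repr x i)^2 := sq_nonneg _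
    exact mul_le_mul_of_nonneg_right (hc i hi) h2
  · rw [hsupp i hi]; simp

lemma dotProduct_self_pos' {k : ℕ} (x : Fin k → ℝ) (hx : x ≠ 0) : 0 < x ⬝ᵥ x := by
  rcases Function.ne_iff.1 hx with ⟨i, hi⟩
  have : (0:ℝ) < ∑ j, x j * x j := by
    apply Finset.sum_pos' (fun j _ => mul_self_nonneg _)
    exact ⟨i, Finset.mem_univ i, mul_self_pos.2 hi⟩
  simpa [dotProduct] using this

lemma finrank_span_image {k : ℕ} (A : Matrix (Fin k) (Fin k) ℝ) (hA : A.IsHermitian)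
    (t : Finset (Fin k)) :
    finrank ℝ (span ℝ ((evB A hA) '' t) : Submodule ℝ (Fin k → ℝ)) = t.card := by
  rw [show ((evB A hA) '' t : Set (Fin k → ℝ)) = Set.range (fun i : t => evB A hA i) by
    ext y; simp]
  rw [show (fun i : t => evB A hA i) = (evB A hA) ∘ Subtype.val from rfl,
    finrank_span_eq_card ((evB A hA).linearIndependent.comp _ Subtype.val_injective)]
  simp

lemma exists_common {k : ℕ} (U W : Submodule ℝ (Fin k → ℝ))
    (h : k < finrank ℝ U + finrank ℝ W) :
    ∃ x : Fin k → ℝ, x ≠ 0 ∧ x ∈ U ∧ x ∈ W := by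
  have h1 : finrank ℝ (U ⊔ W : Submodule ℝ (Fin k → ℝ)) ≤ k := by
    have := Submodule.finrank_le (U ⊔ W)
    simpa using this
  have h2 := Submodule.finrank_sup_add_finrank_inf_eq U W
  have h3 : 0 < finrank ℝ (U ⊓ W : Submodule ℝ (Fin k → ℝ)) := by omega
  have : Nontrivial (U ⊓ W : Submodule ℝ (Fin k → ℝ)) := finrank_pos_iff.1 h3
  obtain ⟨x, hx⟩ := exists_ne (0 : (U ⊓ W : Submodule ℝ (Fin k → ℝ)))
  refine ⟨x.1, ?_, x.2.1, x.2.2⟩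
  simpa [Submodule.coe_eq_zero] using hx

/-- Extension by zero of a vector in `Fin m → ℝ` to `Fin n → ℝ`. -/
noncomputable def Jmap {m n : ℕ} (h : m ≤ n) : (Fin m → ℝ) →ₗ[ℝ] (Fin n → ℝ) where
  toFun y := fun i => if hi : (i : ℕ) < m then y ⟨i, hi⟩ else 0
  map_add' y z := by funext i; by_cases hi : (i:ℕ) < m <;> simp [hi]
  map_smul' a y := by funext i; by_cases hi : (i:ℕ) < m <;> simp [hi]

lemma Jmap_inj {m n : ℕ} (h : m ≤ n) : Function.Injective (Jmap h) := by
  intro y z hyz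
  funext i
  have := congrFun hyz (Fin.castLE h i)
  simpa [Jmap, i.2] using this

lemma sum_J {m n : ℕ} (h : m ≤ n) (f : Fin n → ℝ)
    (hf : ∀ i : Fin n, ¬ (i:ℕ) < m → f i = 0) :
    ∑ i, f i = ∑ i : Fin m, f (Fin.castLE h i) := by
  have : ∑ i : Fin m, f (Fin.castLE h i) = ∑ i ∈ Finset.univ.map (Fin.castLEEmb h), f i := by
    rw [Finset.sum_map]; rfl
  rw [this]
  symm
  apply Finset.sum_subset (Finset.subset_univ _)
  intro i _ hi
  apply hf
  intro hlt
  exact hi (by simp [Fin.castLEEmb]; exact ⟨⟨i, hlt⟩, rfl⟩)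

lemma Jmap_dot {m n : ℕ} (h : m ≤ n) (y z : Fin m → ℝ) :
    (Jmap h y) ⬝ᵥ (Jmap h z) = y ⬝ᵥ z := by
  unfold dotProduct
  rw [sum_J h]
  · refine Finset.sum_congr rfl fun i _ => ?_
    simp [Jmap, i.2]
  · intro i hi
    simp [Jmap, hi]

lemma Jmap_quad {m n : ℕ} (h : m ≤ n) (S : Matrix (Fin n) (Fin n) ℝ) (y : Fin m → ℝ) :
    (Jmap h y) ⬝ᵥ (S *ᵥ (Jmap h y)) = y ⬝ᵥ ((S.submatrix (Fin.castLE h) (Fin.castLE h)) *ᵥ y) := by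
  unfold dotProduct mulVec
  rw [sum_J h]
  · refine Finset.sum_congr rfl fun i _ => ?_
    have h1 : (Jmap h y) (Fin.castLE h i) = y i := by simp [Jmap, i.2]
    rw [h1]
    congr 1
    unfold dotProduct
    rw [sum_J h]
    · refine Finset.sum_congr rfl fun j _ => ?_
      simp [Jmap, j.2, submatrix]
    · intro j hj; simp [Jmap, hj]
  · intro i hi; simp [Jmap, hi]

end CauchyInterlacingAux

/-- Cauchy's interlacing theorem: if `T` is the leading principal `m × m` submatrix of the
symmetric `n × n` matrix `S` (`m < n`), and `σ`, `τ` enumerate their eigenvalues in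
nondecreasing order, then `σ j ≤ τ j ≤ σ (n - m + j)`. -/
theorem cauchy_interlacing {n m : ℕ} (hmn : m < n)
    (S : Matrix (Fin n) (Fin n) ℝ) (hS : S.IsHermitian)
    (hT : (S.submatrix (Fin.castLE hmn.le) (Fin.castLE hmn.le)).IsHermitian)
    (σ : Fin n → ℝ) (τ : Fin m → ℝ)
    (hσmono : Monotone σ) (hτmono : Monotone τ)
    (hσ : ∃ e : Fin n ≃ Fin n, σ = hS.eigenvalues ∘ e)
    (hτ : ∃ e : Fin m ≃ Fin m, τ = hT.eigenvalues ∘ e) :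
    ∀ j : Fin m,
      σ ⟨j.1, lt_trans j.2 hmn⟩ ≤ τ j ∧
      τ j ≤ σ ⟨n - m + j.1, by have := j.2; omega⟩ := by
  obtain ⟨eS, heS⟩ := hσ
  obtain ⟨eT, heT⟩ := hτ
  set T := S.submatrix (Fin.castLE hmn.le) (Fin.castLE hmn.le) with hTdef
  intro j
  have hm0 : 0 < m := lt_of_le_of_lt (Nat.zero_le _) j.2
  constructor
  · -- σ j ≤ τ j
    set jn : Fin n := ⟨j.1, lt_trans j.2 hmn⟩ with hjn
    set tT : Finset (Fin m) := (Finset.Iic j).image eT with htT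
    set tS : Finset (Fin n) := (Finset.Ici jn).image eS with htS
    set U : Submodule ℝ (Fin n → ℝ) :=
      Submodule.map (Jmap hmn.le) (span ℝ ((evB T hT) '' tT)) with hU
    set V : Submodule ℝ (Fin n → ℝ) := span ℝ ((evB S hS) '' tS) with hV
    have hcardT : tT.card = j.1 + 1 := by
      rw [htT, Finset.card_image_of_injective _ eT.injective, Fin.card_Iic]
    have hcardS : tS.card = n - j.1 := by
      rw [htS, Finset.card_image_of_injective _ eS.injective, Fin.card_Ici]
    have hrU : finrank ℝ U = j.1 + 1 := by
      rw [hU, ← hcardT, ← finrank_span_image T hT tT]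
      exact (Submodule.equivMapOfInjective _ (Jmap_inj hmn.le) _).finrank_eq.symm
    have hrV : finrank ℝ V = n - j.1 := by
      rw [hV, ← hcardS]; exact finrank_span_image S hS tS
    obtain ⟨x, hx0, hxU, hxV⟩ := exists_common U V (by
      rw [hrU, hrV]; have := j.2; omega)
    obtain ⟨y, hy, hxy⟩ := hxU
    have hq_le : x ⬝ᵥ (S *ᵥ x) ≤ τ j * (x ⬝ᵥ x) := by
      have h1 : y ⬝ᵥ (T *ᵥ y) ≤ τ j * (y ⬝ᵥ y) := by
        apply quad_le T hT tT (τ j) _ y hy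
        intro i hi
        obtain ⟨i', hi', rfl⟩ := Finset.mem_image.1 hi
        have : hT.eigenvalues (eT i') = τ i' := by rw [heT]; rfl
        rw [this]
        exact hτmono (Finset.mem_Iic.1 hi')
      calc x ⬝ᵥ (S *ᵥ x) = y ⬝ᵥ (T *ᵥ y) := by rw [← hxy, Jmap_quad]
        _ ≤ τ j * (y ⬝ᵥ y) := h1
        _ = τ j * (x ⬝ᵥ x) := by rw [← hxy, Jmap_dot]
    have hq_ge : σ jn * (x ⬝ᵥ x) ≤ x ⬝ᵥ (S *ᵥ x) := by
      apply quad_ge S hS tS (σ jn) _ x hxV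
      intro i hi
      obtain ⟨i', hi', rfl⟩ := Finset.mem_image.1 hi
      have : hS.eigenvalues (eS i') = σ i' := by rw [heS]; rfl
      rw [this]
      exact hσmono (Finset.mem_Ici.1 hi')
    have hd : 0 < x ⬝ᵥ x := dotProduct_self_pos' x hx0
    have := le_trans hq_ge hq_le
    exact le_of_mul_le_mul_right this hd
  · -- τ j ≤ σ (n - m + j)
    set jn : Fin n := ⟨n - m + j.1, by have := j.2; omega⟩ with hjn
    set tT : Finset (Fin m) := (Finset.Ici j).image eT with htT
    set tS : Finset (Fin n) := (Finset.Iic jn).image eS with htS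
    set U : Submodule ℝ (Fin n → ℝ) :=
      Submodule.map (Jmap hmn.le) (span ℝ ((evB T hT) '' tT)) with hU
    set V : Submodule ℝ (Fin n → ℝ) := span ℝ ((evB S hS) '' tS) with hV
    have hcardT : tT.card = m - j.1 := by
      rw [htT, Finset.card_image_of_injective _ eT.injective, Fin.card_Ici]
    have hcardS : tS.card = n - m + j.1 + 1 := by
      rw [htS, Finset.card_image_of_injective _ eS.injective, Fin.card_Iic]
    have hrU : finrank ℝ U = m - j.1 := by
      rw [hU, ← hcardT, ← finrank_span_image T hT tT]
      exact (Submodule.equivMapOfInjective _ (Jmap_inj hmn.le) _).finrank_eq.symm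
    have hrV : finrank ℝ V = n - m + j.1 + 1 := by
      rw [hV, ← hcardS]; exact finrank_span_image S hS tS
    obtain ⟨x, hx0, hxU, hxV⟩ := exists_common U V (by
      rw [hrU, hrV]; have := j.2; omega)
    obtain ⟨y, hy, hxy⟩ := hxU
    have hq_ge : τ j * (x ⬝ᵥ x) ≤ x ⬝ᵥ (S *ᵥ x) := by
      have h1 : τ j * (y ⬝ᵥ y) ≤ y ⬝ᵥ (T *ᵥ y) := by
        apply quad_ge T hT tT (τ j) _ y hy
        intro i hi
        obtain ⟨i', hi', rfl⟩ := Finset.mem_image.1 hi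
        have : hT.eigenvalues (eT i') = τ i' := by rw [heT]; rfl
        rw [this]
        exact hτmono (Finset.mem_Ici.1 hi')
      calc τ j * (x ⬝ᵥ x) = τ j * (y ⬝ᵥ y) := by rw [← hxy, Jmap_dot]
        _ ≤ y ⬝ᵥ (T *ᵥ y) := h1
        _ = x ⬝ᵥ (S *ᵥ x) := by rw [← hxy, Jmap_quad]
    have hq_le : x ⬝ᵥ (S *ᵥ x) ≤ σ jn * (x ⬝ᵥ x) := by
      apply quad_le S hS tS (σ jn) _ x hxV
      intro i hi
      obtain ⟨i', hi', rfl⟩ := Finset.mem_image.1 hi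
      have : hS.eigenvalues (eS i') = σ i' := by rw [heS]; rfl
      rw [this]
      exact hσmono (Finset.mem_Iic.1 hi')
    have hd : 0 < x ⬝ᵥ x := dotProduct_self_pos' x hx0
    have := le_trans hq_ge hq_le
    exact le_of_mul_le_mul_right this hd
end

section
/- If u = (u_r, u_c) is an eigenvector of D = [[R, B], [B^T, C]] with eigenvalue λ < 0 and C is positive definite, then defining u_min := -C^{-1} B^T u_r, one has u_r · B (u_min - u_c) = -B^T u_r · (C^{-1} - (C - λ I)^{-1}) B^T u_r ≤ 0. -/
open Matrix

private lemma dot_symm {n : ℕ} {M : Matrix (Fin n) (Fin n) ℝ} (h : M.IsHermitian)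
    (x y : Fin n → ℝ) : x ⬝ᵥ (M *ᵥ y) = y ⬝ᵥ (M *ᵥ x) := by
  have hT : Mᵀ = M := by
    have := h
    unfold Matrix.IsHermitian at this
    simpa [Matrix.conjTranspose, Matrix.map, Matrix.transpose] using this
  rw [Matrix.dotProduct_mulVec, ← Matrix.mulVec_transpose, hT, dotProduct_comm]

/-- For an eigenvector `u = (u_r, u_c)` of `D` with eigenvalue `λ < 0` and `C` positive
definite, `u_r ⬝ B (u_min - u_c) = -(Bᵀ u_r) ⬝ (C⁻¹ - (C - λI)⁻¹) (Bᵀ u_r) ≤ 0`. -/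
theorem force_difference_nonpos {nr nc : ℕ}
    (R : Matrix (Fin nr) (Fin nr) ℝ) (B : Matrix (Fin nr) (Fin nc) ℝ)
    (C : Matrix (Fin nc) (Fin nc) ℝ)
    (hR : R.IsSymm) (hC : C.PosDef)
    (lam : ℝ) (hlam : lam < 0)
    (ur : Fin nr → ℝ) (uc : Fin nc → ℝ)
    (hu : Sum.elim ur uc ≠ 0)
    (heig : (Matrix.fromBlocks R B Bᵀ C) *ᵥ (Sum.elim ur uc) =
      lam • Sum.elim ur uc) :
    ur ⬝ᵥ (B *ᵥ ((-(C⁻¹ *ᵥ (Bᵀ *ᵥ ur))) - uc)) =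
      -((Bᵀ *ᵥ ur) ⬝ᵥ ((C⁻¹ - (C - lam • 1)⁻¹) *ᵥ (Bᵀ *ᵥ ur))) ∧
    ur ⬝ᵥ (B *ᵥ ((-(C⁻¹ *ᵥ (Bᵀ *ᵥ ur))) - uc)) ≤ 0 := by
  set v : Fin nc → ℝ := Bᵀ *ᵥ ur with hv
  set M : Matrix (Fin nc) (Fin nc) ℝ := C - lam • 1 with hMdef
  -- M is positive definite
  have hsemi : ((-lam) • (1 : Matrix (Fin nc) (Fin nc) ℝ)).PosSemidef := by
    refine Matrix.PosSemidef.of_dotProduct_mulVec_nonneg (by simp [Matrix.IsHermitian]) fun x => ?_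
    simp only [Matrix.smul_mulVec, Matrix.one_mulVec, dotProduct_smul, smul_eq_mul]
    have h1 : (0:ℝ) ≤ star x ⬝ᵥ x := dotProduct_star_self_nonneg x
    nlinarith
  have hM : M.PosDef := by
    have : M = C + (-lam) • (1 : Matrix (Fin nc) (Fin nc) ℝ) := by
      rw [hMdef, neg_smul, sub_eq_add_neg]
    rw [this]
    exact hC.add_posSemidef hsemi
  -- extract the bottom block equation
  have hbot : v + C *ᵥ uc = lam • uc := by
    funext i
    have h := congrFun heig (Sum.inr i)
    simpa [Matrix.fromBlocks_mulVec] using h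
  have h1 : M *ᵥ uc = -v := by
    rw [hMdef, Matrix.sub_mulVec, Matrix.smul_mulVec, Matrix.one_mulVec, ← hbot]
    abel
  have hucval : uc = -(M⁻¹ *ᵥ v) := by
    have := congrArg (fun y => M⁻¹ *ᵥ y) h1
    simp only [Matrix.mulVec_mulVec] at this
    rwa [Matrix.nonsing_inv_mul _ (Matrix.isUnit_iff_isUnit_det _ |>.mp hM.isUnit),
      Matrix.one_mulVec, Matrix.mulVec_neg] at this
  -- dot product rewriting
  have hdot : ∀ w : Fin nc → ℝ, ur ⬝ᵥ (B *ᵥ w) = v ⬝ᵥ w := by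
    intro w
    rw [Matrix.dotProduct_mulVec, hv, Matrix.mulVec_transpose]
  -- the equality
  have heq : ur ⬝ᵥ (B *ᵥ ((-(C⁻¹ *ᵥ v)) - uc)) =
      -(v ⬝ᵥ ((C⁻¹ - M⁻¹) *ᵥ v)) := by
    rw [hdot, hucval, Matrix.sub_mulVec]
    simp [dotProduct_sub, dotProduct_neg, sub_neg_eq_add]
    ring
  refine ⟨heq, ?_⟩
  rw [heq, neg_nonpos]
  -- show 0 ≤ v ⬝ᵥ ((C⁻¹ - M⁻¹) *ᵥ v)
  set w : Fin nc → ℝ := M⁻¹ *ᵥ v with hw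
  set z : Fin nc → ℝ := C⁻¹ *ᵥ v with hz
  have hMinv : IsUnit M.det := Matrix.isUnit_iff_isUnit_det _ |>.mp hM.isUnit
  have hCinv : IsUnit C.det := Matrix.isUnit_iff_isUnit_det _ |>.mp hC.isUnit
  have hvMw : M *ᵥ w = v := by
    rw [hw, Matrix.mulVec_mulVec, Matrix.mul_nonsing_inv _ hMinv, Matrix.one_mulVec]
  have hvCz : C *ᵥ z = v := by
    rw [hz, Matrix.mulVec_mulVec, Matrix.mul_nonsing_inv _ hCinv, Matrix.one_mulVec]
  have hMw : M *ᵥ w = C *ᵥ w - lam • w := by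
    rw [hMdef, Matrix.sub_mulVec, Matrix.smul_mulVec, Matrix.one_mulVec]
  -- v ⬝ z - v ⬝ w = -lam * (w ⬝ z)
  have key1 : v ⬝ᵥ z - v ⬝ᵥ w = -lam * (w ⬝ᵥ z) := by
    have e1 : v ⬝ᵥ z = w ⬝ᵥ v - lam * (w ⬝ᵥ z) := by
      calc v ⬝ᵥ z = (M *ᵥ w) ⬝ᵥ z := by rw [hvMw]
        _ = (C *ᵥ w) ⬝ᵥ z - lam * (w ⬝ᵥ z) := by
            rw [hMw]; simp [sub_dotProduct, smul_dotProduct]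
        _ = w ⬝ᵥ (C *ᵥ z) - lam * (w ⬝ᵥ z) := by
            rw [dotProduct_comm (C *ᵥ w) z, dot_symm hC.isHermitian z w]
        _ = w ⬝ᵥ v - lam * (w ⬝ᵥ z) := by rw [hvCz]
    have e2 : v ⬝ᵥ w = w ⬝ᵥ v := dotProduct_comm v w
    rw [e1, e2]; ring
  -- w ⬝ z ≥ 0
  have key2 : 0 ≤ w ⬝ᵥ z := by
    have hzeq : z = w - lam • (C⁻¹ *ᵥ w) := by
      have : C⁻¹ *ᵥ v = C⁻¹ *ᵥ (C *ᵥ w - lam • w) := by rw [← hMw, hvMw]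
      rw [hz, this, Matrix.mulVec_sub, Matrix.mulVec_mulVec,
        Matrix.nonsing_inv_mul _ hCinv, Matrix.one_mulVec, Matrix.mulVec_smul]
    rw [hzeq, dotProduct_sub, dotProduct_smul, smul_eq_mul]
    have hww : (0:ℝ) ≤ w ⬝ᵥ w := by
      have := dotProduct_star_self_nonneg w
      simpa using this
    have hwCw : (0:ℝ) ≤ w ⬝ᵥ (C⁻¹ *ᵥ w) := by
      have := hC.inv.posSemidef.dotProduct_mulVec_nonneg w
      simpa using this
    nlinarith
  have : 0 ≤ v ⬝ᵥ z - v ⬝ᵥ w := by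
    rw [key1]; nlinarith
  have hfinal : v ⬝ᵥ ((C⁻¹ - M⁻¹) *ᵥ v) = v ⬝ᵥ z - v ⬝ᵥ w := by
    rw [Matrix.sub_mulVec, dotProduct_sub, ← hz, ← hw]
  linarith [hfinal ▸ this]
end

section
/- If D u = λ_at u for the unique negative eigenvalue λ_at of a symmetric matrix D = [[R, B], [B^T, C]] with C positive definite, and the Schur complement D_cg has a negative eigenvalue λ_cg equal to λ_at, then B(u_min - u_c) = 0, where u = (u_r, u_c) and u_min = -C^{-1} B^T u_r. Moreover u_r / ||u_r|| is an eigenvector of D_cg for λ_cg. -/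
open Matrix

/-- If `λ_at = λ_cg`, then `B(u_min - u_c) = 0` and `u_r / ‖u_r‖` is an eigenvector of
`D_cg` for `λ_cg`. -/
theorem equal_eigenvalues_implies_force_zero {nr nc : ℕ}
    (R : Matrix (Fin nr) (Fin nr) ℝ) (B : Matrix (Fin nr) (Fin nc) ℝ)
    (C : Matrix (Fin nc) (Fin nc) ℝ)
    (hR : R.IsSymm) (hC : C.PosDef)
    (lamAt lamCg : ℝ)
    (ur : Fin nr → ℝ) (uc : Fin nc → ℝ)
    (hAtNeg : lamAt < 0)
    (hu : Sum.elim ur uc ≠ 0)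
    (hunit : (Sum.elim ur uc) ⬝ᵥ (Sum.elim ur uc) = 1)
    (heig : (Matrix.fromBlocks R B Bᵀ C) *ᵥ (Sum.elim ur uc) =
      lamAt • Sum.elim ur uc)
    (hAtOnly : ∀ (μ : ℝ) (w : Fin nr ⊕ Fin nc → ℝ), w ≠ 0 →
      (Matrix.fromBlocks R B Bᵀ C) *ᵥ w = μ • w → μ = lamAt ∨ 0 < μ)
    (hCgNeg : lamCg < 0)
    (hCgEig : ∃ w : Fin nr → ℝ, w ≠ 0 ∧ (R - B * C⁻¹ * Bᵀ) *ᵥ w = lamCg • w)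
    (hCgOnly : ∀ (μ : ℝ) (w : Fin nr → ℝ), w ≠ 0 →
      (R - B * C⁻¹ * Bᵀ) *ᵥ w = μ • w → μ = lamCg ∨ 0 < μ)
    (heq : lamAt = lamCg) :
    B *ᵥ ((-(C⁻¹ *ᵥ (Bᵀ *ᵥ ur))) - uc) = 0 ∧
    ur ≠ 0 ∧
    (R - B * C⁻¹ * Bᵀ) *ᵥ ((Real.sqrt (ur ⬝ᵥ ur))⁻¹ • ur) =
      lamCg • ((Real.sqrt (ur ⬝ᵥ ur))⁻¹ • ur) := by
  -- block equations
  have h1 : R *ᵥ ur + B *ᵥ uc = lamAt • ur := by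
    funext i
    have := congrFun heig (Sum.inl i)
    simpa [Matrix.fromBlocks_mulVec] using this
  have h2 : Bᵀ *ᵥ ur + C *ᵥ uc = lamAt • uc := by
    funext i
    have := congrFun heig (Sum.inr i)
    simpa [Matrix.fromBlocks_mulVec] using this
  have hCdet : IsUnit C.det := hC.det_pos.ne'.isUnit
  have hCC : C * C⁻¹ = 1 := Matrix.mul_nonsing_inv C hCdet
  -- ur ≠ 0
  have hur : ur ≠ 0 := by
    intro h0
    have huc : uc ≠ 0 := by
      intro h0'
      apply hu
      funext i
      cases i <;> simp [h0, h0']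
    have hCuc : C *ᵥ uc = lamAt • uc := by
      have : Bᵀ *ᵥ ur = 0 := by simp [h0]
      rw [this, zero_add] at h2
      exact h2
    have hpos : 0 < uc ⬝ᵥ (C *ᵥ uc) := by
      have := hC.dotProduct_mulVec_pos huc
      simpa using this
    rw [hCuc] at hpos
    have : uc ⬝ᵥ (lamAt • uc) = lamAt * (uc ⬝ᵥ uc) := by
      simp [dotProduct_smul, smul_eq_mul]
    rw [this] at hpos
    have hnn : 0 ≤ uc ⬝ᵥ uc := Finset.sum_nonneg fun i _ => mul_self_nonneg _
    nlinarith
  set A : Matrix (Fin nr) (Fin nr) ℝ := R - B * C⁻¹ * Bᵀ with hAdef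
  set d : Fin nc → ℝ := C⁻¹ *ᵥ (Bᵀ *ᵥ ur) + uc with hddef
  have hCd : C *ᵥ d = lamAt • uc := by
    have : C *ᵥ d = Bᵀ *ᵥ ur + C *ᵥ uc := by
      rw [hddef, Matrix.mulVec_add, Matrix.mulVec_mulVec, hCC, Matrix.one_mulVec]
    rw [this, h2]
  have hAur : A *ᵥ ur = lamAt • ur - B *ᵥ d := by
    have hBd : B *ᵥ d = B *ᵥ (C⁻¹ *ᵥ (Bᵀ *ᵥ ur)) + B *ᵥ uc := by
      rw [hddef, Matrix.mulVec_add]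
    have : A *ᵥ ur = R *ᵥ ur - (B * C⁻¹ * Bᵀ) *ᵥ ur := by
      rw [hAdef, Matrix.sub_mulVec]
    rw [this, hBd]
    have hRur : R *ᵥ ur = lamAt • ur - B *ᵥ uc := by
      rw [← h1]; abel
    rw [hRur, Matrix.mulVec_mulVec, Matrix.mulVec_mulVec]
    abel
  -- A is symmetric (Hermitian)
  have hCinv : C⁻¹ᵀ = C⁻¹ := by
    rw [Matrix.transpose_nonsing_inv]
    congr 1
    have := hC.1
    rwa [Matrix.IsHermitian, Matrix.conjTranspose_eq_transpose_of_trivial] at this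
  have hAherm : A.IsHermitian := by
    rw [Matrix.IsHermitian, Matrix.conjTranspose_eq_transpose_of_trivial, hAdef]
    rw [Matrix.transpose_sub, hR, Matrix.transpose_mul, Matrix.transpose_mul,
      Matrix.transpose_transpose, hCinv, Matrix.mul_assoc]
  -- M := A - lamAt • 1 is PSD
  have hMherm : (A - lamAt • (1 : Matrix (Fin nr) (Fin nr) ℝ)).IsHermitian := by
    apply hAherm.sub
    rw [Matrix.IsHermitian, Matrix.conjTranspose_eq_transpose_of_trivial,
      Matrix.transpose_smul, Matrix.transpose_one]
  have hMpsd : (A - lamAt • (1 : Matrix (Fin nr) (Fin nr) ℝ)).PosSemidef := by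
    apply hMherm.posSemidef_iff_eigenvalues_nonneg.mpr
    intro i
    rw [Pi.zero_apply]
    set v : Fin nr → ℝ := ⇑(hMherm.eigenvectorBasis i) with hv
    have hveq : (A - lamAt • (1 : Matrix (Fin nr) (Fin nr) ℝ)) *ᵥ v
        = hMherm.eigenvalues i • v := hMherm.mulVec_eigenvectorBasis i
    have hvne : v ≠ 0 := by
      intro h0
      apply hMherm.eigenvectorBasis.orthonormal.ne_zero i
      apply PiLp.ext
      intro j
      exact congrFun h0 j
    have hAv : A *ᵥ v = (hMherm.eigenvalues i + lamAt) • v := by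
      have h' := hveq
      simp only [Matrix.sub_mulVec, Matrix.smul_mulVec, Matrix.one_mulVec] at h'
      linear_combination (norm := module) h'
    rcases hCgOnly _ v hvne hAv with h | h
    · linarith
    · linarith
  -- key inequality
  have hkey : 0 ≤ ur ⬝ᵥ ((A - lamAt • (1 : Matrix (Fin nr) (Fin nr) ℝ)) *ᵥ ur) := by
    have := hMpsd.dotProduct_mulVec_nonneg ur
    simpa using this
  have hexp : ur ⬝ᵥ ((A - lamAt • (1 : Matrix (Fin nr) (Fin nr) ℝ)) *ᵥ ur)
      = -(ur ⬝ᵥ (B *ᵥ d)) := by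
    rw [Matrix.sub_mulVec, Matrix.smul_mulVec, Matrix.one_mulVec, hAur]
    rw [dotProduct_sub, dotProduct_sub]
    simp [dotProduct_smul]
  have hBdd : ur ⬝ᵥ (B *ᵥ d) = d ⬝ᵥ (C *ᵥ d) - lamAt * (uc ⬝ᵥ uc) := by
    have h3 : ur ⬝ᵥ (B *ᵥ d) = (Bᵀ *ᵥ ur) ⬝ᵥ d := by
      rw [Matrix.mulVec_transpose, Matrix.dotProduct_mulVec]
    have h4 : Bᵀ *ᵥ ur = C *ᵥ d - C *ᵥ uc := by
      have : C *ᵥ d = Bᵀ *ᵥ ur + C *ᵥ uc := by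
        rw [hddef, Matrix.mulVec_add, Matrix.mulVec_mulVec, hCC, Matrix.one_mulVec]
      rw [this]; abel
    have hCsym : Cᵀ = C := by
      have := hC.1
      rwa [Matrix.IsHermitian, Matrix.conjTranspose_eq_transpose_of_trivial] at this
    have h5 : (C *ᵥ uc) ⬝ᵥ d = lamAt * (uc ⬝ᵥ uc) := by
      have hvm : C *ᵥ uc = uc ᵥ* C := by
        conv_lhs => rw [← hCsym]
        exact Matrix.mulVec_transpose C uc
      rw [hvm, ← Matrix.dotProduct_mulVec, hCd]
      simp [dotProduct_smul, smul_eq_mul]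
    have h6 : (C *ᵥ d) ⬝ᵥ d = d ⬝ᵥ (C *ᵥ d) := dotProduct_comm _ _
    rw [h3, h4, sub_dotProduct, h5, h6]
  -- d = 0
  have hd0 : d = 0 := by
    by_contra hdne
    have hpos : 0 < d ⬝ᵥ (C *ᵥ d) := by
      have := hC.dotProduct_mulVec_pos hdne
      simpa using this
    have hucnn : 0 ≤ uc ⬝ᵥ uc := Finset.sum_nonneg fun i _ => mul_self_nonneg _
    rw [hexp, hBdd] at hkey
    nlinarith
  have hBd0 : B *ᵥ d = 0 := by rw [hd0, Matrix.mulVec_zero]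
  refine ⟨?_, hur, ?_⟩
  · have : -(C⁻¹ *ᵥ (Bᵀ *ᵥ ur)) - uc = -d := by rw [hddef]; abel
    rw [this, Matrix.mulVec_neg, hBd0, neg_zero]
  · have hAeig : A *ᵥ ur = lamCg • ur := by
      rw [hAur, hBd0, sub_zero, heq]
    rw [Matrix.mulVec_smul, hAeig, smul_comm]
end

section
/- Rayleigh quotient bound: if λ_at < 0 is the unique negative eigenvalue of D with eigenvector u = (u_r, u_c), C positive definite, and λ_cg is the smallest eigenvalue of D_cg, then λ_cg ≤ (u_r · D_cg u_r)/||u_r||² = λ_at + [u_r · B(u_min - u_c)]/||u_r||² ≤ λ_at, where u_min = -C^{-1} B^T u_r. -/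
open Matrix

lemma my_lower_rayleigh {n : ℕ} (A : Matrix (Fin n) (Fin n) ℝ) (hA : A.IsHermitian) (μ : ℝ)
    (h : ∀ i, μ ≤ hA.eigenvalues i) (x : Fin n → ℝ) :
    μ * (x ⬝ᵥ x) ≤ x ⬝ᵥ (A *ᵥ x) := by
  set U : Matrix (Fin n) (Fin n) ℝ := (hA.eigenvectorUnitary : Matrix (Fin n) (Fin n) ℝ) with hUdef
  have hU : U * star U = 1 := mem_unitaryGroup_iff.mp hA.eigenvectorUnitary.2
  have hspec : A = U * diagonal hA.eigenvalues * star U := by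
    have := hA.spectral_theorem
    simpa [RCLike.ofReal_real_eq_id, Function.comp] using this
  have key : A - μ • (1 : Matrix (Fin n) (Fin n) ℝ)
      = U * diagonal (fun i => hA.eigenvalues i - μ) * star U := by
    have hd : diagonal (fun i => hA.eigenvalues i - μ)
        = diagonal hA.eigenvalues - μ • (1 : Matrix (Fin n) (Fin n) ℝ) := by
      rw [smul_one_eq_diagonal, ← diagonal_sub]
    rw [hd, Matrix.mul_sub, Matrix.sub_mul, ← hspec]
    congr 1
    rw [Matrix.mul_smul, Matrix.mul_one, Matrix.smul_mul, hU]
  have hpsd : ((A - μ • (1 : Matrix (Fin n) (Fin n) ℝ))).PosSemidef := by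
    rw [key]
    exact (Matrix.PosSemidef.diagonal (fun i => sub_nonneg.2 (h i))).mul_mul_conjTranspose_same U
  have h2 := hpsd.dotProduct_mulVec_nonneg x
  simp only [star_trivial, Matrix.sub_mulVec, Matrix.smul_mulVec, Matrix.one_mulVec,
    dotProduct_sub, dotProduct_smul, smul_eq_mul] at h2
  linarith

/-- Rayleigh quotient bound:
`λ_cg ≤ (u_r ⬝ D_cg u_r)/‖u_r‖² = λ_at + (u_r ⬝ B(u_min - u_c))/‖u_r‖² ≤ λ_at`. -/
theorem rayleigh_quotient_bound {nr nc : ℕ}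
    (R : Matrix (Fin nr) (Fin nr) ℝ) (B : Matrix (Fin nr) (Fin nc) ℝ)
    (C : Matrix (Fin nc) (Fin nc) ℝ)
    (hR : R.IsSymm) (hC : C.PosDef)
    (lamAt lamCg : ℝ)
    (ur : Fin nr → ℝ) (uc : Fin nc → ℝ)
    (hAtNeg : lamAt < 0)
    (hunit : (Sum.elim ur uc) ⬝ᵥ (Sum.elim ur uc) = 1)
    (heig : (Matrix.fromBlocks R B Bᵀ C) *ᵥ (Sum.elim ur uc) =
      lamAt • Sum.elim ur uc)
    (hAtOnly : ∀ (μ : ℝ) (w : Fin nr ⊕ Fin nc → ℝ), w ≠ 0 →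
      (Matrix.fromBlocks R B Bᵀ C) *ᵥ w = μ • w → μ = lamAt ∨ 0 < μ)
    (hCgEig : ∃ w : Fin nr → ℝ, w ≠ 0 ∧ (R - B * C⁻¹ * Bᵀ) *ᵥ w = lamCg • w)
    (hCgMin : ∀ (μ : ℝ) (w : Fin nr → ℝ), w ≠ 0 →
      (R - B * C⁻¹ * Bᵀ) *ᵥ w = μ • w → lamCg ≤ μ) :
    lamCg ≤ (ur ⬝ᵥ ((R - B * C⁻¹ * Bᵀ) *ᵥ ur)) / (ur ⬝ᵥ ur) ∧
    (ur ⬝ᵥ ((R - B * C⁻¹ * Bᵀ) *ᵥ ur)) / (ur ⬝ᵥ ur) =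
      lamAt + (ur ⬝ᵥ (B *ᵥ ((-(C⁻¹ *ᵥ (Bᵀ *ᵥ ur))) - uc))) / (ur ⬝ᵥ ur) ∧
    lamAt + (ur ⬝ᵥ (B *ᵥ ((-(C⁻¹ *ᵥ (Bᵀ *ᵥ ur))) - uc))) / (ur ⬝ᵥ ur) ≤ lamAt := by
  -- block equations
  rw [fromBlocks_mulVec] at heig
  have h1 : R *ᵥ ur + B *ᵥ uc = lamAt • ur := funext fun i => by
    simpa using congrFun heig (Sum.inl i)
  have h2 : Bᵀ *ᵥ ur + C *ᵥ uc = lamAt • uc := funext fun i => by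
    simpa using congrFun heig (Sum.inr i)
  have hdet : IsUnit C.det := hC.det_pos.ne'.isUnit
  have hCi : C * C⁻¹ = 1 := mul_nonsing_inv C hdet
  have hiC : C⁻¹ * C = 1 := nonsing_inv_mul C hdet
  have hCs : Cᵀ = C := by
    rw [← conjTranspose_eq_transpose_of_trivial]; exact hC.1
  -- ur ≠ 0
  have hsplit : ur ⬝ᵥ ur + uc ⬝ᵥ uc = 1 := by
    rw [← sumElim_dotProduct_sumElim]; exact hunit
  have hur : ur ≠ 0 := by
    intro h0
    have hCuc : C *ᵥ uc = lamAt • uc := by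
      have h2' := h2
      rw [h0] at h2'
      simpa using h2'
    have huc : uc ≠ 0 := by
      intro h0'
      rw [h0, h0'] at hsplit
      simp at hsplit
    have hpos := hC.dotProduct_mulVec_pos huc
    rw [hCuc] at hpos
    simp only [star_trivial, dotProduct_smul, smul_eq_mul] at hpos
    have hucn : 0 ≤ uc ⬝ᵥ uc := Finset.sum_nonneg fun i _ => mul_self_nonneg _
    nlinarith
  have hq : 0 < ur ⬝ᵥ ur := by
    have h0 : 0 ≤ ur ⬝ᵥ ur := Finset.sum_nonneg fun i _ => mul_self_nonneg _
    exact lt_of_le_of_ne h0 (fun h => hur (dotProduct_self_eq_zero.mp h.symm))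
  -- symmetry of the Schur complement
  have hA : (R - B * C⁻¹ * Bᵀ).IsHermitian := by
    have hCinv : (C⁻¹)ᵀ = C⁻¹ := by rw [transpose_nonsing_inv, hCs]
    rw [Matrix.IsHermitian, conjTranspose_eq_transpose_of_trivial, transpose_sub,
      transpose_mul, transpose_mul, transpose_transpose, hCinv, hR.eq, Matrix.mul_assoc]
  -- key vector identity
  have hkey : (R - B * C⁻¹ * Bᵀ) *ᵥ ur
      = lamAt • ur + B *ᵥ ((-(C⁻¹ *ᵥ (Bᵀ *ᵥ ur))) - uc) := by
    have hR1 : R *ᵥ ur = lamAt • ur - B *ᵥ uc := eq_sub_of_add_eq h1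
    rw [Matrix.sub_mulVec, hR1, Matrix.mulVec_sub, Matrix.mulVec_neg,
      ← Matrix.mulVec_mulVec, ← Matrix.mulVec_mulVec]
    abel
  set s : ℝ := ur ⬝ᵥ (B *ᵥ ((-(C⁻¹ *ᵥ (Bᵀ *ᵥ ur))) - uc)) with hs_def
  have hdot : ur ⬝ᵥ ((R - B * C⁻¹ * Bᵀ) *ᵥ ur) = lamAt * (ur ⬝ᵥ ur) + s := by
    rw [hkey, dotProduct_add, dotProduct_smul, smul_eq_mul]
  -- computation of s
  have hBtur : Bᵀ *ᵥ ur = lamAt • uc - C *ᵥ uc := eq_sub_of_add_eq h2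
  have humin : (-(C⁻¹ *ᵥ (Bᵀ *ᵥ ur))) - uc = (-lamAt) • (C⁻¹ *ᵥ uc) := by
    rw [hBtur, Matrix.mulVec_sub, Matrix.mulVec_smul, Matrix.mulVec_mulVec, hiC,
      Matrix.one_mulVec, neg_smul]
    abel
  have hCw : (C *ᵥ uc) ⬝ᵥ (C⁻¹ *ᵥ uc) = uc ⬝ᵥ uc := by
    rw [dotProduct_comm, dotProduct_mulVec, ← Matrix.mulVec_transpose, hCs,
      Matrix.mulVec_mulVec, hCi, Matrix.one_mulVec]
  have hsval : s = -lamAt * (lamAt * (uc ⬝ᵥ (C⁻¹ *ᵥ uc)) - uc ⬝ᵥ uc) := by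
    rw [hs_def, humin, Matrix.mulVec_smul, dotProduct_smul, smul_eq_mul,
      dotProduct_mulVec, ← Matrix.mulVec_transpose, hBtur, sub_dotProduct,
      smul_dotProduct, smul_eq_mul, hCw]
  have ht : 0 ≤ uc ⬝ᵥ (C⁻¹ *ᵥ uc) := by
    have := hC.inv.posSemidef.dotProduct_mulVec_nonneg uc
    simpa using this
  have hucc : 0 ≤ uc ⬝ᵥ uc := Finset.sum_nonneg fun i _ => mul_self_nonneg _
  have hs0 : s ≤ 0 := by
    have e1 : 0 ≤ lamAt * lamAt * (uc ⬝ᵥ (C⁻¹ *ᵥ uc)) := mul_nonneg (mul_self_nonneg lamAt) ht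
    have e2 : lamAt * (uc ⬝ᵥ uc) ≤ 0 := mul_nonpos_of_nonpos_of_nonneg hAtNeg.le hucc
    nlinarith
  refine ⟨?_, ?_, ?_⟩
  · -- lamCg ≤ Rayleigh quotient
    have hne : Nonempty (Fin nr) := by
      obtain ⟨i, -⟩ := Function.ne_iff.mp hur
      exact ⟨i⟩
    obtain ⟨i0, -, hmin⟩ := Finset.exists_min_image Finset.univ hA.eigenvalues
      ⟨Classical.arbitrary _, Finset.mem_univ _⟩
    have hw0 : (⇑(hA.eigenvectorBasis i0) : Fin nr → ℝ) ≠ 0 := by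
      intro h0
      exact hA.eigenvectorBasis.orthonormal.ne_zero i0 (by ext j; exact congrFun h0 j)
    have hlc : lamCg ≤ hA.eigenvalues i0 :=
      hCgMin _ _ hw0 (hA.mulVec_eigenvectorBasis i0)
    have hray := my_lower_rayleigh _ hA (hA.eigenvalues i0)
      (fun i => hmin i (Finset.mem_univ i)) ur
    rw [le_div_iff₀ hq]
    nlinarith
  · -- the equality
    rw [hdot, add_div, mul_div_cancel_right₀ _ hq.ne']
  · -- the final inequality
    have : s / (ur ⬝ᵥ ur) ≤ 0 := div_nonpos_of_nonpos_of_nonneg hs0 hq.le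
    linarith
end
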